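/- arXiv:2212.02443 — 4 statements merged into one kernel-verified Lean document; each statement's English description precedes it below -/
import Mathlib

section
/- Let δ be a smooth symmetric diagonal with inverse δ⁻¹ and α(u) = ∫₀ᵘ δ(t) dt. Then ∫₀¹ δ⁻¹(u) du = 1 − α(1) and ∫₀¹ (δ⁻¹(u))² du = 5/6 − α(1). -/
open MeasureTheory Set

noncomputable section

/-- A smooth symmetric diagonal `δ` with (continuous) derivative `δ'`:
continuous, strictly increasing, 2-Lipschitz, `δ(0)=0`, `δ(1)=1`, `δ(t) ≤ t`,
satisfying the symmetry identity `δ(u) = 2u - 1 + δ(1-u)`, differentiable with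
continuous derivative, and `0 < δ'(u) < 2` for all but finitely many `u`. -/
def SmoothSymDiagonal (δ δ' : ℝ → ℝ) : Prop :=
  ContinuousOn δ (Icc 0 1) ∧
  StrictMonoOn δ (Icc 0 1) ∧
  (∀ u ∈ Icc (0:ℝ) 1, ∀ v ∈ Icc (0:ℝ) 1, |δ u - δ v| ≤ 2 * |u - v|) ∧
  δ 0 = 0 ∧ δ 1 = 1 ∧
  (∀ t ∈ Icc (0:ℝ) 1, δ t ∈ Icc (0:ℝ) 1 ∧ δ t ≤ t) ∧
  (∀ u ∈ Icc (0:ℝ) 1, δ u = 2 * u - 1 + δ (1 - u)) ∧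
  (∀ u ∈ Icc (0:ℝ) 1, HasDerivWithinAt δ (δ' u) (Icc 0 1) u) ∧
  ContinuousOn δ' (Icc 0 1) ∧
  {u ∈ Icc (0:ℝ) 1 | ¬(0 < δ' u ∧ δ' u < 2)}.Finite

/-- `finv` is the inverse of the bijection `f : [0,1] → [0,1]`. -/
def InverseOnUnitInterval (f finv : ℝ → ℝ) : Prop :=
  (∀ t ∈ Icc (0:ℝ) 1, finv t ∈ Icc (0:ℝ) 1) ∧
  (∀ t ∈ Icc (0:ℝ) 1, f (finv t) = t) ∧
  (∀ t ∈ Icc (0:ℝ) 1, finv (f t) = t)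

theorem integral_identities_delta_inverse (δ δ' δinv : ℝ → ℝ)
    (hδ : SmoothSymDiagonal δ δ') (hδinv : InverseOnUnitInterval δ δinv)
    (α : ℝ → ℝ) (hα : ∀ u : ℝ, α u = ∫ t in (0:ℝ)..u, δ t) :
    (∫ u in (0:ℝ)..1, δinv u) = 1 - α 1 ∧
    (∫ u in (0:ℝ)..1, (δinv u) ^ 2) = 5/6 - α 1 := by
  obtain ⟨hc, hm, -, h0, h1, hmaps, hsym, hderiv, hderiv', -⟩ := hδ
  obtain ⟨hinvmem, hfi, hif⟩ := hδinv
  have h01 : (0:ℝ) ≤ 1 := zero_le_one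
  have hu : uIcc (0:ℝ) 1 = Icc 0 1 := uIcc_of_le h01
  have hmem0 : (0:ℝ) ∈ Icc (0:ℝ) 1 := left_mem_Icc.2 h01
  have hmem1 : (1:ℝ) ∈ Icc (0:ℝ) 1 := right_mem_Icc.2 h01
  have hinv0 : δinv 0 = 0 := by have := hif 0 hmem0; rwa [h0] at this
  have hinv1 : δinv 1 = 1 := by have := hif 1 hmem1; rwa [h1] at this
  -- strict monotonicity of the inverse
  have hinvmono : StrictMonoOn δinv (Icc 0 1) := by
    intro x hx y hy hxy
    by_contra h
    push_neg at h
    have := (hm.le_iff_le (hinvmem y hy) (hinvmem x hx)).2 h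
    rw [hfi y hy, hfi x hx] at this
    exact absurd hxy (not_lt.2 this)
  -- continuity of the inverse
  have hinvc : ContinuousOn δinv (Icc 0 1) := by
    intro a ha
    obtain ⟨ha0, ha1⟩ := ha
    have hR : a < 1 → ContinuousWithinAt δinv (Ici a) a := by
      intro ha1'
      have hs : Icc a 1 ∈ nhdsWithin a (Ici a) :=
        Icc_mem_nhdsGE_of_mem (left_mem_Ico.2 ha1')
      refine (hinvmono.mono (Icc_subset_Icc ha0 le_rfl)).continuousWithinAt_right_of_exists_between
        hs (fun b hb => ?_)
      have haI : a ∈ Icc (0:ℝ) 1 := ⟨ha0, ha1⟩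
      have ht : δinv a ∈ Icc (0:ℝ) 1 := hinvmem a haI
      have ht1 : δinv a < 1 := by
        have := hinvmono haI hmem1 ha1'
        rwa [hinv1] at this
      have hx : min b 1 ∈ Icc (0:ℝ) 1 :=
        ⟨le_min (le_trans ht.1 hb.le) h01, min_le_right _ _⟩
      have htx : δinv a < min b 1 := lt_min hb ht1
      refine ⟨δ (min b 1), ⟨?_, (hmaps _ hx).1.2⟩, ?_, ?_⟩
      · have := (hm.le_iff_le ht hx).2 htx.le
        rwa [hfi a haI] at this
      · rw [hif _ hx]; exact htx
      · rw [hif _ hx]; exact min_le_left _ _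
    have hL : 0 < a → ContinuousWithinAt δinv (Iic a) a := by
      intro h0a
      have hs : Icc 0 a ∈ nhdsWithin a (Iic a) :=
        Icc_mem_nhdsLE_of_mem (right_mem_Ioc.2 h0a)
      refine (hinvmono.mono (Icc_subset_Icc le_rfl ha1)).continuousWithinAt_left_of_exists_between
        hs (fun b hb => ?_)
      have haI : a ∈ Icc (0:ℝ) 1 := ⟨ha0, ha1⟩
      have ht : δinv a ∈ Icc (0:ℝ) 1 := hinvmem a haI
      have ht0 : 0 < δinv a := by
        have := hinvmono hmem0 haI h0a
        rwa [hinv0] at this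
      have hx : max b 0 ∈ Icc (0:ℝ) 1 :=
        ⟨le_max_right _ _, max_le (le_trans hb.le ht.2) h01⟩
      have htx : max b 0 < δinv a := max_lt hb ht0
      refine ⟨δ (max b 0), ⟨(hmaps _ hx).1.1, ?_⟩, ?_, ?_⟩
      · have := (hm.le_iff_le hx ht).2 htx.le
        rwa [hfi a haI] at this
      · rw [hif _ hx]; exact le_max_left _ _
      · rw [hif _ hx]; exact htx
    rcases eq_or_lt_of_le ha1 with rfl | ha1'
    · exact (hL one_pos).mono Icc_subset_Iic_self
    rcases eq_or_lt_of_le ha0 with h0a | h0a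
    · exact (hR ha1').mono (by rw [← h0a]; exact Icc_subset_Ici_self)
    · exact ((hR ha1').union (hL h0a)).mono
        (fun x _ => (le_total a x).imp (fun h => h) (fun h => h))
  -- substitution lemma
  have hsubst : ∀ g : ℝ → ℝ, ContinuousOn g (Icc 0 1) →
      (∫ x in (0:ℝ)..1, δ' x • (g ∘ δ) x) = ∫ u in (0:ℝ)..1, g u := by
    intro g hg
    have := intervalIntegral.integral_comp_smul_deriv'' (f := δ) (f' := δ') (g := g)
      (a := 0) (b := 1)
      (by rw [hu]; exact hc)
      (by
        intro x hx
        rw [min_eq_left h01, max_eq_right h01] at hx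
        have hxI : x ∈ Icc (0:ℝ) 1 := Ioo_subset_Icc_self hx
        exact ((hderiv x hxI).hasDerivAt (Icc_mem_nhds hx.1 hx.2)).hasDerivWithinAt)
      (by rw [hu]; exact hderiv')
      (by
        refine hg.mono ?_
        rintro y ⟨x, hx, rfl⟩
        rw [hu] at hx
        exact (hmaps x hx).1)
    rwa [h0, h1] at this
  -- FTC lemma
  have hFTC : ∀ F F' : ℝ → ℝ, ContinuousOn F (Icc 0 1) →
      (∀ x ∈ Icc (0:ℝ) 1, HasDerivWithinAt F (F' x) (Icc 0 1) x) →
      ContinuousOn F' (Icc 0 1) →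
      (∫ x in (0:ℝ)..1, F' x) = F 1 - F 0 := by
    intro F F' hF hF' hF'c
    refine intervalIntegral.integral_eq_sub_of_hasDeriv_right_of_le h01 hF (fun x hx => ?_) ?_
    · have hxI : x ∈ Icc (0:ℝ) 1 := Ioo_subset_Icc_self hx
      exact ((hF' x hxI).hasDerivAt (Icc_mem_nhds hx.1 hx.2)).hasDerivWithinAt
    · exact (hF'c.mono (by rw [hu])).intervalIntegrable
  have hδint : IntervalIntegrable δ volume 0 1 := (hc.mono (by rw [hu])).intervalIntegrable
  -- I = ∫ x * δ x
  set I := ∫ x in (0:ℝ)..1, x * δ x with hI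
  have hxδint : IntervalIntegrable (fun x => x * δ x) volume 0 1 :=
    ((continuousOn_id.mul hc).mono (by rw [hu])).intervalIntegrable
  -- the flip identity
  have hflip : (∫ x in (0:ℝ)..1, (1 - x) * δ (1 - x)) = I := by
    have := intervalIntegral.integral_comp_sub_left (a := 0) (b := 1)
      (fun t => t * δ t) 1
    simpa using this
  have hsymI : ∀ x ∈ uIcc (0:ℝ) 1, (1 - x) * δ (1 - x) = (1-x) * δ x + (1-x)*(1-2*x) := by
    intro x hx
    rw [hu] at hx
    have := hsym x hx
    have hδ1x : δ (1 - x) = δ x - 2 * x + 1 := by linarith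
    rw [hδ1x]; ring
  have hpoly : (∫ x in (0:ℝ)..1, (1-x)*(1-2*x)) = 1/6 := by
    have h : ∀ x : ℝ, (1-x)*(1-2*x) = 2*x^2 - 3*x + 1 := fun x => by ring
    simp_rw [h]
    rw [intervalIntegral.integral_add ((by fun_prop : Continuous _).intervalIntegrable _ _) ((by fun_prop : Continuous _).intervalIntegrable _ _), intervalIntegral.integral_sub ((by fun_prop : Continuous _).intervalIntegrable _ _) ((by fun_prop : Continuous _).intervalIntegrable _ _)]
    norm_num [integral_pow, mul_comm]
  have h1xδint : IntervalIntegrable (fun x => (1-x) * δ x) volume 0 1 :=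
    (((continuousOn_const.sub continuousOn_id).mul hc).mono (by rw [hu])).intervalIntegrable
  have hpint : IntervalIntegrable (fun x : ℝ => (1-x)*(1-2*x)) volume 0 1 :=
    ((continuous_const.sub continuous_id).mul
      (continuous_const.sub (continuous_const.mul continuous_id))).intervalIntegrable 0 1
  have hIval : I = α 1 / 2 + 1/12 := by
    have e1 : (∫ x in (0:ℝ)..1, (1 - x) * δ (1 - x))
        = (∫ x in (0:ℝ)..1, (1-x) * δ x) + ∫ x in (0:ℝ)..1, (1-x)*(1-2*x) := by
      rw [← intervalIntegral.integral_add h1xδint hpint]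
      exact intervalIntegral.integral_congr hsymI
    have e2 : (∫ x in (0:ℝ)..1, (1-x) * δ x) = α 1 - I := by
      rw [hα, hI, ← intervalIntegral.integral_sub hδint hxδint]
      refine intervalIntegral.integral_congr (fun x _ => ?_)
      ring
    rw [hflip, e2, hpoly] at e1
    linarith
  -- first identity
  have s1 : (∫ u in (0:ℝ)..1, δinv u) = ∫ x in (0:ℝ)..1, x * δ' x := by
    rw [← hsubst δinv hinvc]
    refine intervalIntegral.integral_congr (fun x hx => ?_)
    rw [hu] at hx
    simp only [Function.comp, smul_eq_mul, hif x hx, mul_comm]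
  have int_xδ' : IntervalIntegrable (fun x => x * δ' x) volume 0 1 :=
    ((continuousOn_id.mul hderiv').mono (by rw [hu])).intervalIntegrable
  have int_1δ : IntervalIntegrable (fun x => 1 * δ x) volume 0 1 :=
    ((continuousOn_const.mul hc).mono (by rw [hu])).intervalIntegrable
  have prod1 : (∫ x in (0:ℝ)..1, (1 * δ x + x * δ' x)) = 1 := by
    rw [hFTC (fun x => x * δ x) (fun x => 1 * δ x + x * δ' x)
      (continuousOn_id.mul hc)
      (fun x hx => (hasDerivWithinAt_id x _).mul (hderiv x hx))
      ((continuousOn_const.mul hc).add (continuousOn_id.mul hderiv'))]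
    simp [h0, h1]
  have h1δ : (∫ x in (0:ℝ)..1, 1 * δ x) = α 1 := by
    rw [hα]
    exact intervalIntegral.integral_congr (fun x _ => one_mul _)
  have first : (∫ u in (0:ℝ)..1, δinv u) = 1 - α 1 := by
    rw [s1]
    rw [intervalIntegral.integral_add int_1δ int_xδ', h1δ] at prod1
    linarith
  -- second identity
  have s2 : (∫ u in (0:ℝ)..1, (δinv u) ^ 2) = ∫ x in (0:ℝ)..1, x * x * δ' x := by
    have e : (∫ u in (0:ℝ)..1, (δinv u) ^ 2) = ∫ u in (0:ℝ)..1, δinv u * δinv u :=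
      intervalIntegral.integral_congr (fun u _ => sq (δinv u) ▸ by ring)
    rw [e, ← hsubst (fun u => δinv u * δinv u) (hinvc.mul hinvc)]
    refine intervalIntegral.integral_congr (fun x hx => ?_)
    rw [hu] at hx
    simp only [Function.comp, smul_eq_mul, hif x hx]
    ring
  have int_xxδ' : IntervalIntegrable (fun x => x * x * δ' x) volume 0 1 :=
    (((continuousOn_id.mul continuousOn_id).mul hderiv').mono (by rw [hu])).intervalIntegrable
  have int_2xδ : IntervalIntegrable (fun x => (1 * x + x * 1) * δ x) volume 0 1 :=
    ((((continuousOn_const.mul continuousOn_id).add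
      (continuousOn_id.mul continuousOn_const)).mul hc).mono (by rw [hu])).intervalIntegrable
  have prod2 : (∫ x in (0:ℝ)..1, ((1 * x + x * 1) * δ x + x * x * δ' x)) = 1 := by
    rw [hFTC (fun x => x * x * δ x) (fun x => (1 * x + x * 1) * δ x + x * x * δ' x)
      ((continuousOn_id.mul continuousOn_id).mul hc)
      (fun x hx => ((hasDerivWithinAt_id x _).mul (hasDerivWithinAt_id x _)).mul (hderiv x hx))
      ((((continuousOn_const.mul continuousOn_id).add
        (continuousOn_id.mul continuousOn_const)).mul hc).add
        ((continuousOn_id.mul continuousOn_id).mul hderiv'))]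
    simp [h0, h1]
  have h2xδ : (∫ x in (0:ℝ)..1, (1 * x + x * 1) * δ x) = 2 * I := by
    rw [hI, ← intervalIntegral.integral_const_mul]
    exact intervalIntegral.integral_congr (fun x _ => by ring)
  have second : (∫ u in (0:ℝ)..1, (δinv u) ^ 2) = 5/6 - α 1 := by
    rw [s2]
    rw [intervalIntegral.integral_add int_2xδ int_xxδ', h2xδ] at prod2
    linarith [hIval]
  exact ⟨first, second⟩
end
end

section
/- Let δ be a smooth symmetric diagonal with inverse δ⁻¹, let g(u) = 2u − δ(u) with inverse g⁻¹, and let K_δ(u,v) = min{u, v, (δ(u)+δ(v))/2} be the diagonal copula of δ. Then ∫₀¹∫₀¹ K_δ(u,v) du dv = ∫₀¹ g⁻¹(u)·δ⁻¹(u) du. -/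
open MeasureTheory Set

noncomputable section

/-- The diagonal copula `K_δ(u,v) = min {u, v, (δ(u)+δ(v))/2}`. -/
def diagCopula (δ : ℝ → ℝ) : ℝ → ℝ → ℝ := fun u v => min (min u v) ((δ u + δ v) / 2)

/-- Extend a self-map of `[0,1]` to `ℝ` by the identity outside `[0,1]`. -/
def ext01 (f : ℝ → ℝ) : ℝ → ℝ := fun t => if t ∈ Icc (0:ℝ) 1 then f t else t

lemma ext01_eq {f : ℝ → ℝ} {t : ℝ} (ht : t ∈ Icc (0:ℝ) 1) : ext01 f t = f t := if_pos ht

lemma ext01_continuous {f : ℝ → ℝ}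
    (hmap : ∀ t ∈ Icc (0:ℝ) 1, f t ∈ Icc (0:ℝ) 1)
    (hmono : MonotoneOn f (Icc 0 1))
    (hsurj : ∀ y ∈ Icc (0:ℝ) 1, ∃ x ∈ Icc (0:ℝ) 1, f x = y) :
    Continuous (ext01 f) := by
  have hmono' : Monotone (ext01 f) := by
    intro a b hab
    unfold ext01
    by_cases ha : a ∈ Icc (0:ℝ) 1 <;> by_cases hb : b ∈ Icc (0:ℝ) 1 <;>
      simp only [ha, hb, if_pos, if_neg, if_true, if_false]
    · exact hmono ha hb hab
    · have hb1 : 1 < b := by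
        by_contra hble
        exact hb ⟨ha.1.trans hab, le_of_not_gt hble⟩
      exact le_trans (hmap a ha).2 hb1.le
    · have ha0 : a < 0 := by
        by_contra hale
        exact ha ⟨le_of_not_gt hale, hab.trans hb.2⟩
      exact le_trans ha0.le (hmap b hb).1
    · exact hab
  have hsurj' : Function.Surjective (ext01 f) := by
    intro y
    by_cases hy : y ∈ Icc (0:ℝ) 1
    · obtain ⟨x, hx, hfx⟩ := hsurj y hy
      exact ⟨x, by rw [ext01_eq hx, hfx]⟩
    · exact ⟨y, by rw [ext01, if_neg hy]⟩
  exact hmono'.continuous_of_surjective hsurj'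

theorem diag_copula_integral (δ δ' δinv : ℝ → ℝ)
    (hδ : SmoothSymDiagonal δ δ') (hδinv : InverseOnUnitInterval δ δinv)
    (g ginv : ℝ → ℝ) (hg : ∀ u : ℝ, g u = 2 * u - δ u)
    (hginv : InverseOnUnitInterval g ginv) :
    (∫ u in (0:ℝ)..1, ∫ v in (0:ℝ)..1, diagCopula δ u v) =
      ∫ u in (0:ℝ)..1, ginv u * δinv u := by
  obtain ⟨hc, hsm, hlip, h0, h1, hmem, hsym, hdv, hd'c, hfin⟩ := hδ
  obtain ⟨hdi_mem, hdi_r, hdi_l⟩ := hδinv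
  obtain ⟨hgi_mem, hgi_r, hgi_l⟩ := hginv
  have hI0 : (0:ℝ) ∈ Icc (0:ℝ) 1 := ⟨le_refl 0, zero_le_one⟩
  have hI1 : (1:ℝ) ∈ Icc (0:ℝ) 1 := ⟨zero_le_one, le_refl 1⟩
  -- basic facts about g
  have hg0 : g 0 = 0 := by rw [hg, h0]; ring
  have hg1 : g 1 = 1 := by rw [hg, h1]; ring
  have hδle : ∀ t ∈ Icc (0:ℝ) 1, δ t ≤ t := fun t ht => (hmem t ht).2
  have hδmem : ∀ t ∈ Icc (0:ℝ) 1, δ t ∈ Icc (0:ℝ) 1 := fun t ht => (hmem t ht).1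
  have hgsym : ∀ t ∈ Icc (0:ℝ) 1, g t = 1 - δ (1 - t) := by
    intro t ht
    have := hsym t ht
    rw [hg]; linarith
  have hgmem : ∀ t ∈ Icc (0:ℝ) 1, g t ∈ Icc (0:ℝ) 1 := by
    intro t ht
    have h1t : (1:ℝ) - t ∈ Icc (0:ℝ) 1 := ⟨by linarith [ht.2], by linarith [ht.1]⟩
    constructor
    · rw [hg]; linarith [hδle t ht, ht.1]
    · rw [hgsym t ht]; linarith [(hδmem _ h1t).1]
  have hgle : ∀ t ∈ Icc (0:ℝ) 1, t ≤ g t := by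
    intro t ht; rw [hg]; linarith [hδle t ht]
  have hgsm : StrictMonoOn g (Icc 0 1) := by
    intro a ha b hb hab
    rw [hgsym a ha, hgsym b hb]
    have h1a : (1:ℝ) - a ∈ Icc (0:ℝ) 1 := ⟨by linarith [ha.2], by linarith [ha.1]⟩
    have h1b : (1:ℝ) - b ∈ Icc (0:ℝ) 1 := ⟨by linarith [hb.2], by linarith [hb.1]⟩
    have := hsm h1b h1a (by linarith)
    linarith
  have hgmono : MonotoneOn g (Icc 0 1) := hgsm.monotoneOn
  have hδmono : MonotoneOn δ (Icc 0 1) := hsm.monotoneOn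
  -- facts about inverses
  have hdi0 : δinv 0 = 0 := by have := hdi_l 0 hI0; rwa [h0] at this
  have hdi1 : δinv 1 = 1 := by have := hdi_l 1 hI1; rwa [h1] at this
  have hgi0 : ginv 0 = 0 := by have := hgi_l 0 hI0; rwa [hg0] at this
  have hgi1 : ginv 1 = 1 := by have := hgi_l 1 hI1; rwa [hg1] at this
  have hdi_sm : StrictMonoOn δinv (Icc 0 1) := by
    intro a ha b hb hab
    by_contra hle
    push_neg at hle
    have := hδmono (hdi_mem b hb) (hdi_mem a ha) hle
    rw [hdi_r a ha, hdi_r b hb] at this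
    linarith
  have hgi_sm : StrictMonoOn ginv (Icc 0 1) := by
    intro a ha b hb hab
    by_contra hle
    push_neg at hle
    have := hgmono (hgi_mem b hb) (hgi_mem a ha) hle
    rw [hgi_r a ha, hgi_r b hb] at this
    linarith
  have hdi_ge : ∀ t ∈ Icc (0:ℝ) 1, t ≤ δinv t := by
    intro t ht
    have := hδle (δinv t) (hdi_mem t ht)
    rwa [hdi_r t ht] at this
  have hgi_le : ∀ t ∈ Icc (0:ℝ) 1, ginv t ≤ t := by
    intro t ht
    have := hgle (ginv t) (hgi_mem t ht)
    rwa [hgi_r t ht] at this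
  -- global continuous extensions of the inverses
  set Δ : ℝ → ℝ := ext01 δinv with hΔdef
  set G : ℝ → ℝ := ext01 ginv with hGdef
  have hΔeq : ∀ t ∈ Icc (0:ℝ) 1, Δ t = δinv t := fun t ht => ext01_eq ht
  have hGeq : ∀ t ∈ Icc (0:ℝ) 1, G t = ginv t := fun t ht => ext01_eq ht
  have hΔc : Continuous Δ :=
    ext01_continuous hdi_mem hdi_sm.monotoneOn
      (fun y hy => ⟨δ y, hδmem y hy, hdi_l y hy⟩)
  have hGc : Continuous G :=
    ext01_continuous hgi_mem hgi_sm.monotoneOn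
      (fun y hy => ⟨g y, hgmem y hy, hgi_l y hy⟩)
  -- clamp and the clamped δ
  set cl : ℝ → ℝ := fun t => max 0 (min 1 t) with hcldef
  have hclc : Continuous cl := continuous_const.max (continuous_const.min continuous_id)
  have hclmem : ∀ t, cl t ∈ Icc (0:ℝ) 1 :=
    fun t => ⟨le_max_left _ _, max_le zero_le_one (min_le_left _ _)⟩
  have hcleq : ∀ t ∈ Icc (0:ℝ) 1, cl t = t := by
    intro t ht
    simp only [hcldef]
    rw [min_eq_right ht.2, max_eq_right ht.1]
  set δc : ℝ → ℝ := fun t => δ (cl t) with hδcdef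
  have hδcc : Continuous δc := hc.comp_continuous hclc hclmem
  have hδceq : ∀ t ∈ Icc (0:ℝ) 1, δc t = δ t := by
    intro t ht; simp only [hδcdef]; rw [hcleq t ht]
  -- the antiderivatives
  set q : ℝ → ℝ := fun t => G t * Δ t with hqdef
  have hqc : Continuous q := hGc.mul hΔc
  set M : ℝ → ℝ := fun x => ∫ t in (0:ℝ)..x, q t with hMdef
  have hM : ∀ x : ℝ, HasDerivAt M (q x) x :=
    fun x => (hqc.integral_hasStrictDerivAt 0 x).hasDerivAt
  have hMc : Continuous M := continuous_iff_continuousAt.2 fun x => (hM x).continuousAt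
  set D : ℝ → ℝ := fun x => ∫ t in (0:ℝ)..x, δc t with hDdef
  have hD : ∀ x : ℝ, HasDerivAt D (δc x) x :=
    fun x => (hδcc.integral_hasStrictDerivAt 0 x).hasDerivAt
  have hDc : Continuous D := continuous_iff_continuousAt.2 fun x => (hD x).continuousAt
  -- φ and ψ
  set φ : ℝ → ℝ := fun v => Δ (g v) with hφdef
  set ψ : ℝ → ℝ := fun v => G (δ v) with hψdef
  have hφeq : ∀ v ∈ Icc (0:ℝ) 1, φ v = δinv (g v) := fun v hv => hΔeq _ (hgmem v hv)
  have hψeq : ∀ v ∈ Icc (0:ℝ) 1, ψ v = ginv (δ v) := fun v hv => hGeq _ (hδmem v hv)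
  have hφmem : ∀ v ∈ Icc (0:ℝ) 1, φ v ∈ Icc (0:ℝ) 1 := by
    intro v hv; rw [hφeq v hv]; exact hdi_mem _ (hgmem v hv)
  have hψmem : ∀ v ∈ Icc (0:ℝ) 1, ψ v ∈ Icc (0:ℝ) 1 := by
    intro v hv; rw [hψeq v hv]; exact hgi_mem _ (hδmem v hv)
  have hδφ : ∀ v ∈ Icc (0:ℝ) 1, δ (φ v) = g v := by
    intro v hv; rw [hφeq v hv]; exact hdi_r _ (hgmem v hv)
  have hgψ : ∀ v ∈ Icc (0:ℝ) 1, g (ψ v) = δ v := by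
    intro v hv; rw [hψeq v hv]; exact hgi_r _ (hδmem v hv)
  have hψle : ∀ v ∈ Icc (0:ℝ) 1, ψ v ≤ v := by
    intro v hv
    rw [hψeq v hv]
    exact le_trans (hgi_le _ (hδmem v hv)) (hδle v hv)
  have hφge : ∀ v ∈ Icc (0:ℝ) 1, v ≤ φ v := by
    intro v hv
    rw [hφeq v hv]
    exact le_trans (hgle v hv) (hdi_ge _ (hgmem v hv))
  have hφ1 : φ 1 = 1 := by rw [hφeq 1 hI1, hg1, hdi1]
  have hψ1 : ψ 1 = 1 := by rw [hψeq 1 hI1, h1, hgi1]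
  -- the inner-integral function
  set A : ℝ → ℝ := fun v =>
    ψ v ^ 2 / 2 + (D (φ v) - D (ψ v)) / 2 + (φ v - ψ v) * δ v / 2 + v * (1 - φ v) with hAdef
  -- Step 1: the inner integral equals A v
  have step1 : ∀ v ∈ Icc (0:ℝ) 1, (∫ u in (0:ℝ)..1, diagCopula δ u v) = A v := by
    intro v hv
    have hδv := hδmem v hv
    have hp := hψmem v hv
    have hr := hφmem v hv
    have hpv := hψle v hv
    have hvr := hφge v hv
    have hpr : ψ v ≤ φ v := hpv.trans hvr
    have hgψv : 2 * ψ v - δ (ψ v) = δ v := by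
      have := hgψ v hv; rw [hg] at this; linarith
    have hδφv : δ (φ v) = 2 * v - δ v := by rw [hδφ v hv, hg]
    have hKc : ContinuousOn (fun u => diagCopula δ u v) (Icc 0 1) := by
      simp only [diagCopula]
      have h1 : ContinuousOn (fun u : ℝ => min u v) (Icc 0 1) :=
        (continuous_id.min continuous_const).continuousOn
      have h2 : ContinuousOn (fun u => (δ u + δ v) / 2) (Icc 0 1) :=
        (hc.add continuousOn_const).div_const 2
      exact continuous_min.comp_continuousOn (h1.prodMk h2)
    have hint : ∀ a b : ℝ, a ∈ Icc (0:ℝ) 1 → b ∈ Icc (0:ℝ) 1 → a ≤ b →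
        IntervalIntegrable (fun u => diagCopula δ u v) volume a b := by
      intro a b ha hb hab
      apply ContinuousOn.intervalIntegrable
      apply hKc.mono
      rw [uIcc_of_le hab]
      exact Icc_subset_Icc ha.1 hb.2
    have e1 : (∫ u in (0:ℝ)..(ψ v), diagCopula δ u v) = ψ v ^ 2 / 2 := by
      have heq : EqOn (fun u => diagCopula δ u v) (fun u => u) (uIcc 0 (ψ v)) := by
        intro u hu
        rw [uIcc_of_le hp.1] at hu
        have hu1 : u ∈ Icc (0:ℝ) 1 := ⟨hu.1, hu.2.trans hp.2⟩
        have lip := hlip (ψ v) hp u hu1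
        rw [abs_of_nonneg (by linarith [hu.2] : (0:ℝ) ≤ ψ v - u)] at lip
        have h2 : δ (ψ v) - δ u ≤ |δ (ψ v) - δ u| := le_abs_self _
        simp only [diagCopula]
        rw [min_eq_left (hu.2.trans hpv), min_eq_left (by linarith : u ≤ (δ u + δ v) / 2)]
      rw [intervalIntegral.integral_congr heq, integral_id]
      norm_num
    have e2 : (∫ u in (ψ v)..(φ v), diagCopula δ u v)
        = (D (φ v) - D (ψ v)) / 2 + (φ v - ψ v) * δ v / 2 := by
      have heq : EqOn (fun u => diagCopula δ u v) (fun u => δc u / 2 + δ v / 2)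
          (uIcc (ψ v) (φ v)) := by
        intro u hu
        rw [uIcc_of_le hpr] at hu
        have hu1 : u ∈ Icc (0:ℝ) 1 := ⟨hp.1.trans hu.1, hu.2.trans hr.2⟩
        have lip := hlip u hu1 (ψ v) hp
        rw [abs_of_nonneg (by linarith [hu.1] : (0:ℝ) ≤ u - ψ v)] at lip
        have h2 : δ u - δ (ψ v) ≤ |δ u - δ (ψ v)| := le_abs_self _
        have keyu : (δ u + δ v) / 2 ≤ u := by linarith
        have hmo := hδmono hu1 hr hu.2
        rw [hδφv] at hmo
        have keyv : (δ u + δ v) / 2 ≤ v := by linarith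
        simp only [diagCopula]
        rw [min_eq_right (le_min keyu keyv), hδceq u hu1]
        ring
      rw [intervalIntegral.integral_congr heq,
        intervalIntegral.integral_add ((hδcc.intervalIntegrable _ _).div_const 2)
          intervalIntegrable_const,
        intervalIntegral.integral_div, intervalIntegral.integral_const]
      have hD2 : D (ψ v) + (∫ u in (ψ v)..(φ v), δc u) = D (φ v) :=
        intervalIntegral.integral_add_adjacent_intervals
          (hδcc.intervalIntegrable 0 (ψ v)) (hδcc.intervalIntegrable (ψ v) (φ v))
      rw [smul_eq_mul]
      linarith
    have e3 : (∫ u in (φ v)..1, diagCopula δ u v) = (1 - φ v) * v := by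
      have heq : EqOn (fun u => diagCopula δ u v) (fun _ => v) (uIcc (φ v) 1) := by
        intro u hu
        rw [uIcc_of_le hr.2] at hu
        have hu1 : u ∈ Icc (0:ℝ) 1 := ⟨hr.1.trans hu.1, hu.2⟩
        have hmo := hδmono hr hu1 hu.1
        rw [hδφv] at hmo
        simp only [diagCopula]
        rw [min_eq_right (hvr.trans hu.1), min_eq_left (by linarith : v ≤ (δ u + δ v) / 2)]
      rw [intervalIntegral.integral_congr heq, intervalIntegral.integral_const, smul_eq_mul]
    have c1 := intervalIntegral.integral_add_adjacent_intervals
      (hint 0 (ψ v) hI0 hp hp.1) (hint (ψ v) (φ v) hp hr hpr)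
    have c2 := intervalIntegral.integral_add_adjacent_intervals
      (hint 0 (φ v) hI0 hr hr.1) (hint (φ v) 1 hr hI1 hr.2)
    show _ = ψ v ^ 2 / 2 + (D (φ v) - D (ψ v)) / 2 + (φ v - ψ v) * δ v / 2 + v * (1 - φ v)
    rw [← c2, ← c1, e1, e2, e3]
    ring
  -- Step 2: LHS reduces to ∫ A
  have step2 : (∫ u in (0:ℝ)..1, ∫ v in (0:ℝ)..1, diagCopula δ u v)
      = ∫ v in (0:ℝ)..1, A v := by
    apply intervalIntegral.integral_congr
    intro u hu
    rw [uIcc_of_le zero_le_one] at hu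
    show (∫ v in (0:ℝ)..1, diagCopula δ u v) = A u
    have hswap : (∫ v in (0:ℝ)..1, diagCopula δ u v) = ∫ v in (0:ℝ)..1, diagCopula δ v u := by
      apply intervalIntegral.integral_congr
      intro y _
      simp only [diagCopula]
      rw [min_comm u y, add_comm (δ u) (δ y)]
    rw [hswap]
    exact step1 u hu
  -- continuity of everything on [0,1]
  have hgc : ContinuousOn g (Icc 0 1) := by
    have : g = fun u => 2 * u - δ u := funext hg
    rw [this]
    exact ((continuous_const.mul continuous_id).continuousOn).sub hc
  have hφc : ContinuousOn φ (Icc 0 1) := hΔc.comp_continuousOn hgc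
  have hψc : ContinuousOn ψ (Icc 0 1) := hGc.comp_continuousOn hc
  have hAc : ContinuousOn A (Icc 0 1) := by
    apply ContinuousOn.add
    apply ContinuousOn.add
    apply ContinuousOn.add
    · exact (hψc.pow 2).div_const 2
    · exact ((hDc.comp_continuousOn hφc).sub (hDc.comp_continuousOn hψc)).div_const 2
    · exact ((hφc.sub hψc).mul hc).div_const 2
    · exact continuousOn_id.mul (continuousOn_const.sub hφc)
  -- Step 3: ∫ (A v - v ψ(v) δ'(v)) dv = 0 via the antiderivative W
  -- derivative lemmas valid at interior points
  have hδat' : ∀ y ∈ Ioo (0:ℝ) 1, HasDerivAt δ (δ' y) y := fun y hy =>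
    (hdv y (Ioo_subset_Icc_self hy)).hasDerivAt (Icc_mem_nhds hy.1 hy.2)
  have hgat' : ∀ y ∈ Ioo (0:ℝ) 1, HasDerivAt g (2 - δ' y) y := by
    intro y hy
    have hgfun : g = fun u => 2 * u - δ u := funext hg
    rw [hgfun]
    have := ((hasDerivAt_id y).const_mul (2:ℝ)).sub (hδat' y hy)
    simpa [Pi.sub_def] using this
  have step3 : (∫ v in (0:ℝ)..1, (A v - v * ψ v * δ' v)) = 0 := by
    set S : Set ℝ := {u ∈ Icc (0:ℝ) 1 | ¬(0 < δ' u ∧ δ' u < 2)} with hSdef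
    have hSfin : S.Finite := hfin
    set bad : Set ℝ := (φ ⁻¹' S ∩ Icc 0 1) ∪ (ψ ⁻¹' S ∩ Icc 0 1) with hbaddef
    have hφinj : InjOn φ (Icc 0 1) := by
      apply StrictMonoOn.injOn
      intro a ha b hb hab
      rw [hφeq a ha, hφeq b hb]
      exact hdi_sm (hgmem a ha) (hgmem b hb) (hgsm ha hb hab)
    have hψinj : InjOn ψ (Icc 0 1) := by
      apply StrictMonoOn.injOn
      intro a ha b hb hab
      rw [hψeq a ha, hψeq b hb]
      exact hgi_sm (hδmem a ha) (hδmem b hb) (hsm ha hb hab)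
    have hbadfin : bad.Finite := by
      apply Set.Finite.union
      · apply Set.Finite.of_finite_image (hSfin.subset ?_) (hφinj.mono inter_subset_right)
        rintro y ⟨z, ⟨hzS, _⟩, rfl⟩
        exact hzS
      · apply Set.Finite.of_finite_image (hSfin.subset ?_) (hψinj.mono inter_subset_right)
        rintro y ⟨z, ⟨hzS, _⟩, rfl⟩
        exact hzS
    set W : ℝ → ℝ := fun v => v * A v - v ^ 2 / 2 + (M (g v) - M (δ v)) / 2 with hWdef
    have hWc : ContinuousOn W (Icc 0 1) := by
      apply ContinuousOn.add
      · exact (continuousOn_id.mul hAc).sub ((continuousOn_pow 2).div_const 2)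
      · exact ((hMc.comp_continuousOn hgc).sub (hMc.comp_continuousOn hc)).div_const 2
    have Hd : ∀ x ∈ Ioo (0:ℝ) 1 \ bad, HasDerivAt W (A x - x * ψ x * δ' x) x := by
      intro x hx
      obtain ⟨hxI, hxbad⟩ := hx
      have hxIcc : x ∈ Icc (0:ℝ) 1 := Ioo_subset_Icc_self hxI
      have hφgood : 0 < δ' (φ x) ∧ δ' (φ x) < 2 := by
        by_contra h
        exact hxbad (Or.inl ⟨⟨hφmem x hxIcc, h⟩, hxIcc⟩)
      have hψgood : 0 < δ' (ψ x) ∧ δ' (ψ x) < 2 := by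
        by_contra h
        exact hxbad (Or.inr ⟨⟨hψmem x hxIcc, h⟩, hxIcc⟩)
      have hne1 : δ' (φ x) ≠ 0 := ne_of_gt hφgood.1
      have hne2 : (2:ℝ) - δ' (ψ x) ≠ 0 := sub_ne_zero.mpr (ne_of_lt hψgood.2).symm
      have hgxI : g x ∈ Ioo (0:ℝ) 1 := by
        constructor
        · exact lt_of_lt_of_le hxI.1 (hgle x hxIcc)
        · rw [hgsym x hxIcc]
          have h1x : (1:ℝ) - x ∈ Icc (0:ℝ) 1 := ⟨by linarith [hxI.2], by linarith [hxI.1]⟩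
          have := hsm hI0 h1x (by linarith [hxI.2])
          rw [h0] at this
          linarith
      have hδxI : δ x ∈ Ioo (0:ℝ) 1 := by
        constructor
        · have := hsm hI0 hxIcc hxI.1; rwa [h0] at this
        · exact lt_of_le_of_lt (hδle x hxIcc) hxI.2
      have hφxI : φ x ∈ Ioo (0:ℝ) 1 := by
        constructor
        · exact lt_of_lt_of_le hxI.1 (hφge x hxIcc)
        · rw [hφeq x hxIcc]
          have := hdi_sm (hgmem x hxIcc) hI1 hgxI.2
          rwa [hdi1] at this
      have hψxI : ψ x ∈ Ioo (0:ℝ) 1 := by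
        constructor
        · rw [hψeq x hxIcc]
          have := hgi_sm hI0 (hδmem x hxIcc) hδxI.1
          rwa [hgi0] at this
        · exact lt_of_le_of_lt (hψle x hxIcc) hxI.2
      have hδat : HasDerivAt δ (δ' x) x := hδat' x hxI
      have hΔat : HasDerivAt Δ ((δ' (φ x))⁻¹) (g x) := by
        have hf : HasDerivAt δ (δ' (φ x)) (Δ (g x)) := by
          show HasDerivAt δ (δ' (φ x)) (φ x)
          exact hδat' (φ x) hφxI
        apply HasDerivAt.of_local_left_inverse hΔc.continuousAt hf hne1
        filter_upwards [isOpen_Ioo.mem_nhds hgxI] with y hy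
        rw [hΔeq y (Ioo_subset_Icc_self hy)]
        exact hdi_r y (Ioo_subset_Icc_self hy)
      have hφat : HasDerivAt φ ((δ' (φ x))⁻¹ * (2 - δ' x)) x := hΔat.comp x (hgat' x hxI)
      have hGat : HasDerivAt G ((2 - δ' (ψ x))⁻¹) (δ x) := by
        have hf : HasDerivAt g (2 - δ' (ψ x)) (G (δ x)) := by
          show HasDerivAt g (2 - δ' (ψ x)) (ψ x)
          exact hgat' (ψ x) hψxI
        apply HasDerivAt.of_local_left_inverse hGc.continuousAt hf hne2
        filter_upwards [isOpen_Ioo.mem_nhds hδxI] with y hy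
        rw [hGeq y (Ioo_subset_Icc_self hy)]
        exact hgi_r y (Ioo_subset_Icc_self hy)
      have hψat : HasDerivAt ψ ((2 - δ' (ψ x))⁻¹ * δ' x) x := hGat.comp x hδat
      have hDφat : HasDerivAt (fun y => D (φ y))
          (δc (φ x) * ((δ' (φ x))⁻¹ * (2 - δ' x))) x := (hD (φ x)).comp x hφat
      have hDψat : HasDerivAt (fun y => D (ψ y))
          (δc (ψ x) * ((2 - δ' (ψ x))⁻¹ * δ' x)) x := (hD (ψ x)).comp x hψat
      have hMgat : HasDerivAt (fun y => M (g y)) (q (g x) * (2 - δ' x)) x :=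
        (hM (g x)).comp x (hgat' x hxI)
      have hMδat : HasDerivAt (fun y => M (δ y)) (q (δ x) * δ' x) x :=
        (hM (δ x)).comp x hδat
      have t1 := (hψat.pow 2).div_const 2
      have t2 := (hDφat.sub hDψat).div_const 2
      have t3 := ((hφat.sub hψat).mul hδat).div_const 2
      have t4 := (hasDerivAt_id x).mul ((hasDerivAt_const x (1:ℝ)).sub hφat)
      have hAat : HasDerivAt A
          (2 * ψ x ^ 1 * ((2 - δ' (ψ x))⁻¹ * δ' x) / 2
            + (δc (φ x) * ((δ' (φ x))⁻¹ * (2 - δ' x))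
                - δc (ψ x) * ((2 - δ' (ψ x))⁻¹ * δ' x)) / 2
            + (((δ' (φ x))⁻¹ * (2 - δ' x) - (2 - δ' (ψ x))⁻¹ * δ' x) * δ x
                + (φ x - ψ x) * δ' x) / 2
            + (1 * (1 - φ x) + x * (0 - (δ' (φ x))⁻¹ * (2 - δ' x)))) x :=
        ((t1.add t2).add t3).add t4
      have hWat : HasDerivAt W
          ((1 * A x + x *
            (2 * ψ x ^ 1 * ((2 - δ' (ψ x))⁻¹ * δ' x) / 2
            + (δc (φ x) * ((δ' (φ x))⁻¹ * (2 - δ' x))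
                - δc (ψ x) * ((2 - δ' (ψ x))⁻¹ * δ' x)) / 2
            + (((δ' (φ x))⁻¹ * (2 - δ' x) - (2 - δ' (ψ x))⁻¹ * δ' x) * δ x
                + (φ x - ψ x) * δ' x) / 2
            + (1 * (1 - φ x) + x * (0 - (δ' (φ x))⁻¹ * (2 - δ' x)))))
            - 2 * x ^ 1 / 2
            + (q (g x) * (2 - δ' x) - q (δ x) * δ' x) / 2) x :=
        (((hasDerivAt_id x).mul hAat).sub
          ((hasDerivAt_pow 2 x).div_const 2)).add ((hMgat.sub hMδat).div_const 2)
      have hqgx : q (g x) = x * φ x := by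
        show G (g x) * Δ (g x) = x * φ x
        rw [hGeq (g x) (hgmem x hxIcc), hgi_l x hxIcc]
      have hqδx : q (δ x) = ψ x * x := by
        show G (δ x) * Δ (δ x) = ψ x * x
        rw [hΔeq (δ x) (hδmem x hxIcc), hdi_l x hxIcc]
      have hδcφx : δc (φ x) = 2 * x - δ x := by
        rw [hδceq (φ x) (hφmem x hxIcc), hδφ x hxIcc, hg]
      have hδcψx : δc (ψ x) = 2 * ψ x - δ x := by
        rw [hδceq (ψ x) (hψmem x hxIcc)]
        have := hgψ x hxIcc
        rw [hg] at this
        linarith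
      apply hWat.congr_deriv
      rw [hqgx, hqδx, hδcφx, hδcψx]
      have hAx : A x = ψ x ^ 2 / 2 + (D (φ x) - D (ψ x)) / 2
          + (φ x - ψ x) * δ x / 2 + x * (1 - φ x) := rfl
      rw [hAx]
      ring
    have Hi : IntervalIntegrable (fun v => A v - v * ψ v * δ' v) volume 0 1 := by
      apply ContinuousOn.intervalIntegrable
      rw [uIcc_of_le zero_le_one]
      exact hAc.sub ((continuousOn_id.mul hψc).mul hd'c)
    have hWint := MeasureTheory.integral_eq_of_hasDerivAt_off_countable_of_le W
      (fun v => A v - v * ψ v * δ' v) zero_le_one hbadfin.countable hWc Hd Hi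
    have hW0 : W 0 = 0 := by
      show 0 * A 0 - 0 ^ 2 / 2 + (M (g 0) - M (δ 0)) / 2 = 0
      rw [hg0, h0]
      ring
    have hW1 : W 1 = 0 := by
      show 1 * (ψ 1 ^ 2 / 2 + (D (φ 1) - D (ψ 1)) / 2 + (φ 1 - ψ 1) * δ 1 / 2
        + 1 * (1 - φ 1)) - 1 ^ 2 / 2 + (M (g 1) - M (δ 1)) / 2 = 0
      rw [hg1, h1, hφ1, hψ1]
      ring
    rw [hWint, hW0, hW1]
    ring
  -- Step 4: ∫ v ψ(v) δ'(v) dv = M 1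
  have step4 : (∫ v in (0:ℝ)..1, v * ψ v * δ' v) = M 1 := by
    have Hc : ContinuousOn (fun v => M (δ v)) (Icc 0 1) := hMc.comp_continuousOn hc
    have Hd : ∀ x ∈ Ioo (0:ℝ) 1 \ (∅ : Set ℝ),
        HasDerivAt (fun v => M (δ v)) (x * ψ x * δ' x) x := by
      intro x hx
      have hxI : x ∈ Ioo (0:ℝ) 1 := hx.1
      have hxIcc : x ∈ Icc (0:ℝ) 1 := Ioo_subset_Icc_self hxI
      have hcomp := (hM (δ x)).comp x (hδat' x hxI)
      have hqδx : q (δ x) = ψ x * x := by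
        show G (δ x) * Δ (δ x) = ψ x * x
        rw [hΔeq (δ x) (hδmem x hxIcc), hdi_l x hxIcc]
      have : x * ψ x * δ' x = q (δ x) * δ' x := by rw [hqδx]; ring
      rw [this]
      exact hcomp
    have Hi : IntervalIntegrable (fun v => v * ψ v * δ' v) volume 0 1 := by
      apply ContinuousOn.intervalIntegrable
      rw [uIcc_of_le zero_le_one]
      exact (continuousOn_id.mul hψc).mul hd'c
    have h := MeasureTheory.integral_eq_of_hasDerivAt_off_countable_of_le
      (fun v => M (δ v)) (fun v => v * ψ v * δ' v) zero_le_one countable_empty Hc Hd Hi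
    have hM0 : M 0 = 0 := by
      show (∫ t in (0:ℝ)..0, q t) = 0
      exact intervalIntegral.integral_same
    rw [h]
    show M (δ 1) - M (δ 0) = M 1
    rw [h1, h0, hM0]
    ring
  -- Step 5: M 1 = RHS
  have step5 : M 1 = ∫ u in (0:ℝ)..1, ginv u * δinv u := by
    apply intervalIntegral.integral_congr
    intro t ht
    rw [uIcc_of_le zero_le_one] at ht
    simp only [hqdef]
    rw [hGeq t ht, hΔeq t ht]
  -- assemble
  have hintA : IntervalIntegrable A volume 0 1 := by
    apply ContinuousOn.intervalIntegrable
    rwa [uIcc_of_le zero_le_one]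
  have hinth : IntervalIntegrable (fun v => v * ψ v * δ' v) volume 0 1 := by
    apply ContinuousOn.intervalIntegrable
    rw [uIcc_of_le zero_le_one]
    exact (continuousOn_id.mul hψc).mul hd'c
  have hsub := intervalIntegral.integral_sub hintA hinth
  rw [step2, step5.symm, ← step4]
  have : (∫ v in (0:ℝ)..1, A v) - (∫ v in (0:ℝ)..1, v * ψ v * δ' v) = 0 := by
    rw [← hsub]; exact step3
  linarith
end
end

section
/- Let δ be a smooth symmetric diagonal, α(u) = ∫₀ᵘ δ(t) dt, and K_δ(u,v) = min{u, v, (δ(u)+δ(v))/2} its diagonal copula. Then ∫₀¹∫₀¹ K_δ(u,v) du dv ≤ 2·α(1) − 2·α(1)² − 1/6. -/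
open MeasureTheory Set

noncomputable section

namespace DiagAux

/-- The companion function `ψ(u) = 2u - δ(u)`. -/
def psi (δ : ℝ → ℝ) : ℝ → ℝ := fun u => 2 * u - δ u

/-- Indicator of the strip `δ(u) < t < ψ(u)`. -/
def chi (δ : ℝ → ℝ) : ℝ → ℝ → ℝ := fun u t => (Ioo (δ u) (psi δ u)).indicator 1 t

def μ01 : Measure ℝ := (volume : Measure ℝ).restrict (Ioc (0:ℝ) 1)

instance isProb : IsProbabilityMeasure μ01 := by
  constructor
  rw [μ01, Measure.restrict_apply_univ, Real.volume_Ioc]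
  norm_num

lemma chi_nonneg (δ : ℝ → ℝ) (u t : ℝ) : 0 ≤ chi δ u t := by
  unfold chi
  exact Set.indicator_nonneg (fun _ _ => zero_le_one) t

lemma chi_le_one (δ : ℝ → ℝ) (u t : ℝ) : chi δ u t ≤ 1 := by
  unfold chi
  by_cases h : t ∈ Ioo (δ u) (psi δ u) <;> simp [h]

lemma chi_abs_le (δ : ℝ → ℝ) (u t : ℝ) : ‖chi δ u t‖ ≤ 1 := by
  rw [Real.norm_eq_abs, abs_le]
  exact ⟨by linarith [chi_nonneg δ u t], chi_le_one δ u t⟩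

lemma chi_meas (δ : ℝ → ℝ) (u : ℝ) : Measurable (chi δ u) :=
  measurable_const.indicator measurableSet_Ioo

lemma min_eq_sub_max (a b : ℝ) : min a b = a - max (a - b) 0 := by
  rcases le_total a b with h | h
  · rw [min_eq_left h, max_eq_right (by linarith)]; ring
  · rw [min_eq_right h, max_eq_left (by linarith)]; ring


section Bounds

variable {δ : ℝ → ℝ}
  (hL : ∀ u ∈ Icc (0:ℝ) 1, ∀ v ∈ Icc (0:ℝ) 1, |δ u - δ v| ≤ 2 * |u - v|)
  (h1 : δ 1 = 1)
  (hb : ∀ t ∈ Icc (0:ℝ) 1, δ t ∈ Icc (0:ℝ) 1 ∧ δ t ≤ t)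

include hb in
lemma delta_nonneg {u : ℝ} (hu : u ∈ Icc (0:ℝ) 1) : 0 ≤ δ u := (hb u hu).1.1

include hb in
lemma delta_le {u : ℝ} (hu : u ∈ Icc (0:ℝ) 1) : δ u ≤ u := (hb u hu).2

include hb in
lemma le_psi {u : ℝ} (hu : u ∈ Icc (0:ℝ) 1) : u ≤ psi δ u := by
  have := (hb u hu).2; unfold psi; linarith

include hL h1 in
lemma psi_le_one {u : ℝ} (hu : u ∈ Icc (0:ℝ) 1) : psi δ u ≤ 1 := by
  have h := hL 1 (by norm_num) u hu
  rw [h1] at h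
  have h2 : 1 - δ u ≤ 2 * |1 - u| := (abs_le.mp h).2
  have h3 : |1 - u| = 1 - u := abs_of_nonneg (by linarith [hu.2])
  unfold psi; rw [h3] at h2; linarith

include hL in
lemma psi_mono {u v : ℝ} (hu : u ∈ Icc (0:ℝ) 1) (hv : v ∈ Icc (0:ℝ) 1) (huv : u ≤ v) :
    psi δ u ≤ psi δ v := by
  have h := hL v hv u hu
  have h2 : δ v - δ u ≤ 2 * |v - u| := (abs_le.mp h).2
  rw [abs_of_nonneg (by linarith)] at h2
  unfold psi; linarith

end Bounds

section Integrals

variable {δ : ℝ → ℝ}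
  (hc : ContinuousOn δ (Icc 0 1))
  (hmono : MonotoneOn δ (Icc 0 1))
  (hL : ∀ u ∈ Icc (0:ℝ) 1, ∀ v ∈ Icc (0:ℝ) 1, |δ u - δ v| ≤ 2 * |u - v|)
  (h1 : δ 1 = 1)
  (hb : ∀ t ∈ Icc (0:ℝ) 1, δ t ∈ Icc (0:ℝ) 1 ∧ δ t ≤ t)

/-- Integral of the indicator of `Ioo a b` with `0 ≤ a`, `b ≤ 1` against `μ01`. -/
lemma integral_indicator_Ioo {a b : ℝ} (ha : 0 ≤ a) (hbb : b ≤ 1) :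
    ∫ t, (Ioo a b).indicator (1 : ℝ → ℝ) t ∂μ01 = max (b - a) 0 := by
  rw [MeasureTheory.integral_indicator_one measurableSet_Ioo]
  rw [μ01, measureReal_def, Measure.restrict_apply measurableSet_Ioo]
  have hsub : Ioo a b ∩ Ioc 0 1 = Ioo a b := by
    apply inter_eq_self_of_subset_left
    intro t ht
    exact ⟨lt_of_le_of_lt ha ht.1, le_of_lt (lt_of_lt_of_le ht.2 hbb)⟩
  rw [hsub, Real.volume_Ioo, ENNReal.toReal_ofReal']

include hb in
lemma chi_mul_integral {u v : ℝ} (hu : u ∈ Icc (0:ℝ) 1) (hv : v ∈ Icc (0:ℝ) 1)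
    (hpv : psi δ v ≤ 1) (hpu : psi δ u ≤ 1) :
    ∫ t, chi δ u t * chi δ v t ∂μ01
      = max (min (psi δ u) (psi δ v) - max (δ u) (δ v)) 0 := by
  have key : ∀ t, chi δ u t * chi δ v t
      = (Ioo (max (δ u) (δ v)) (min (psi δ u) (psi δ v))).indicator (1 : ℝ → ℝ) t := by
    intro t
    rw [← Ioo_inter_Ioo, Set.inter_indicator_one]
    rfl
  simp only [key]
  exact integral_indicator_Ioo (le_max_of_le_left (delta_nonneg hb hu)) (min_le_of_left_le hpu)

include hmono hb in
lemma copula_eq_of_le {u v : ℝ} (hu : u ∈ Icc (0:ℝ) 1) (hv : v ∈ Icc (0:ℝ) 1)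
    (hpuv : psi δ u ≤ psi δ v) (hpv : psi δ v ≤ 1) (hpu : psi δ u ≤ 1) (huv : u ≤ v) :
    diagCopula δ u v
      = min u v - (∫ t, chi δ u t * chi δ v t ∂μ01) / 2 := by
  rw [chi_mul_integral hb hu hv hpv hpu]
  rw [min_eq_left hpuv, max_eq_right (hmono hu hv huv)]
  unfold diagCopula psi
  rw [min_eq_left huv]
  rcases le_total u ((δ u + δ v) / 2) with h3 | h3
  · rw [min_eq_left h3, max_eq_right (by linarith)]
    ring
  · rw [min_eq_right h3, max_eq_left (by linarith)]
    ring

include hmono hL h1 hb in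
lemma copula_eq {u v : ℝ} (hu : u ∈ Icc (0:ℝ) 1) (hv : v ∈ Icc (0:ℝ) 1) :
    diagCopula δ u v
      = min u v - (∫ t, chi δ u t * chi δ v t ∂μ01) / 2 := by
  rcases le_total u v with huv | huv
  · exact copula_eq_of_le hmono hb hu hv (psi_mono hL hu hv huv)
      (psi_le_one hL h1 hv) (psi_le_one hL h1 hu) huv
  · have hsymm := copula_eq_of_le hmono hb hv hu (psi_mono hL hv hu huv)
      (psi_le_one hL h1 hu) (psi_le_one hL h1 hv) huv
    have h2 : diagCopula δ u v = diagCopula δ v u := by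
      unfold diagCopula; rw [min_comm u v, add_comm (δ u) (δ v)]
    have h3 : (fun t => chi δ u t * chi δ v t) = fun t => chi δ v t * chi δ u t := by
      funext t; ring
    rw [h2, hsymm, min_comm v u, h3]

include hc in
lemma aem_delta : AEMeasurable δ μ01 :=
  (hc.aemeasurable measurableSet_Icc).mono_measure
    (Measure.restrict_mono Ioc_subset_Icc_self le_rfl)

include hc in
lemma aem_psi : AEMeasurable (psi δ) μ01 := by
  have : ContinuousOn (psi δ) (Icc 0 1) :=
    ((continuous_const.mul continuous_id).continuousOn).sub hc
  exact (this.aemeasurable measurableSet_Icc).mono_measure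
    (Measure.restrict_mono Ioc_subset_Icc_self le_rfl)

include hc in
lemma aesm_chi_prod :
    AEStronglyMeasurable (fun p : ℝ × ℝ => chi δ p.1 p.2) (μ01.prod μ01) := by
  have hns : NullMeasurableSet
      {p : ℝ × ℝ | p.1 ∈ (univ : Set ℝ) ∧ p.2 ∈ Ioo (δ p.1) (psi δ p.1)}
      (μ01.prod volume) :=
    nullMeasurableSet_regionBetween μ01 (aem_delta hc) (aem_psi hc)
      MeasurableSet.univ.nullMeasurableSet
  have hac : μ01.prod μ01 ≪ μ01.prod volume :=
    Measure.AbsolutelyContinuous.prod (Measure.AbsolutelyContinuous.refl _)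
      Measure.restrict_le_self.absolutelyContinuous
  have hns2 := hns.mono_ac hac
  have heq : (fun p : ℝ × ℝ => chi δ p.1 p.2)
      = Set.indicator {p : ℝ × ℝ | p.1 ∈ (univ : Set ℝ) ∧ p.2 ∈ Ioo (δ p.1) (psi δ p.1)}
          (1 : ℝ × ℝ → ℝ) := by
    funext p
    by_cases h : p.2 ∈ Ioo (δ p.1) (psi δ p.1) <;>
      simp [chi, Set.indicator, h, Set.mem_Ioo.mp, h]
    · simp only [mem_Ioo] at h; simp [h]
    · simp only [mem_Ioo] at h; exact fun h' => le_of_not_gt fun h'' => h ⟨h', h''⟩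
  rw [heq]
  exact ((aemeasurable_const (b := (1:ℝ))).indicator₀ hns2).aestronglyMeasurable

include hc in
lemma int_chi_prod :
    Integrable (fun p : ℝ × ℝ => chi δ p.1 p.2) (μ01.prod μ01) := by
  refine Integrable.mono' (integrable_const 1) (aesm_chi_prod hc) ?_
  exact Filter.Eventually.of_forall fun p => chi_abs_le δ p.1 p.2

include hc in
lemma int_chi_swap :
    Integrable (fun p : ℝ × ℝ => chi δ p.2 p.1) (μ01.prod μ01) := by
  have := (int_chi_prod hc).swap
  exact this

/-- The cross-section measure function `m(t) = ∫ u, χ(u,t)`. -/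
def mfun (δ : ℝ → ℝ) : ℝ → ℝ := fun t => ∫ u, chi δ u t ∂μ01

include hc in
lemma int_m : Integrable (mfun δ) μ01 := (int_chi_swap hc).integral_prod_left

lemma m_nonneg (δ : ℝ → ℝ) (t : ℝ) : 0 ≤ mfun δ t :=
  integral_nonneg fun u => chi_nonneg δ u t

lemma m_abs_le (δ : ℝ → ℝ) (t : ℝ) : ‖mfun δ t‖ ≤ 1 := by
  have := norm_integral_le_of_norm_le_const (μ := μ01)
    (f := fun u => chi δ u t) (C := 1)
    (Filter.Eventually.of_forall fun u => chi_abs_le δ u t)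
  simpa [mfun] using this

include hc in
lemma stepA (u : ℝ) :
    ∫ v, (∫ t, chi δ u t * chi δ v t ∂μ01) ∂μ01
      = ∫ t, chi δ u t * mfun δ t ∂μ01 := by
  have hint : Integrable (Function.uncurry fun v t => chi δ u t * chi δ v t)
      (μ01.prod μ01) := by
    refine Integrable.mono' (integrable_const 1) ?_ ?_
    · exact (((chi_meas δ u).comp measurable_snd).aestronglyMeasurable).mul
        (aesm_chi_prod hc)
    · refine Filter.Eventually.of_forall fun p => ?_
      have h1 := chi_nonneg δ u p.2
      have h2 := chi_le_one δ u p.2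
      have h3 := chi_nonneg δ p.1 p.2
      have h4 := chi_le_one δ p.1 p.2
      rw [Function.uncurry, Real.norm_eq_abs, abs_le]
      constructor <;> nlinarith
  rw [MeasureTheory.integral_integral_swap hint]
  congr 1
  funext t
  rw [MeasureTheory.integral_const_mul]
  rfl

lemma ae_mem01 : ∀ᵐ x ∂μ01, x ∈ Ioc (0:ℝ) 1 := by
  unfold μ01
  exact ae_restrict_mem measurableSet_Ioc

include hc in
lemma stepB :
    ∫ u, (∫ t, chi δ u t * mfun δ t ∂μ01) ∂μ01
      = ∫ t, mfun δ t * mfun δ t ∂μ01 := by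
  have hint : Integrable (Function.uncurry fun u t => chi δ u t * mfun δ t)
      (μ01.prod μ01) := by
    refine Integrable.mono' (integrable_const 1) ?_ ?_
    · exact (aesm_chi_prod hc).mul
        (((int_m hc).aestronglyMeasurable).comp_quasiMeasurePreserving
          Measure.quasiMeasurePreserving_snd)
    · refine Filter.Eventually.of_forall fun p => ?_
      have h1 := chi_nonneg δ p.1 p.2
      have h2 := chi_le_one δ p.1 p.2
      have h3 := m_abs_le δ p.2
      rw [Real.norm_eq_abs] at h3 ⊢
      rw [Function.uncurry, abs_mul]
      calc |chi δ p.1 p.2| * |mfun δ p.2| ≤ 1 * 1 := by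
            apply mul_le_mul _ h3 (abs_nonneg _) zero_le_one
            rw [abs_le]; constructor <;> linarith
        _ = 1 := by norm_num
  rw [MeasureTheory.integral_integral_swap hint]
  congr 1
  funext t
  rw [MeasureTheory.integral_mul_const]
  rfl

include hc hL h1 hb in
lemma stepC : ∫ t, mfun δ t ∂μ01 = 1 - 2 * ∫ u, δ u ∂μ01 := by
  have hswap := MeasureTheory.integral_integral_swap
    (f := fun u t => chi δ u t) (μ := μ01) (ν := μ01) (int_chi_prod hc)
  have hswap' : ∫ t, mfun δ t ∂μ01 = ∫ u, (∫ t, chi δ u t ∂μ01) ∂μ01 := by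
    rw [hswap]; rfl
  rw [hswap']
  have hinner : ∀ u ∈ Ioc (0:ℝ) 1, (∫ t, chi δ u t ∂μ01) = 2 * u - 2 * δ u := by
    intro u hu
    have huI : u ∈ Icc (0:ℝ) 1 := Ioc_subset_Icc_self hu
    have := integral_indicator_Ioo (a := δ u) (b := psi δ u)
      (delta_nonneg hb huI) (psi_le_one hL h1 huI)
    unfold chi
    rw [this, max_eq_left (by
      have h1 := delta_le hb huI
      have h2 := le_psi hb huI
      linarith)]
    unfold psi; ring
  have hcongr : ∫ u, (∫ t, chi δ u t ∂μ01) ∂μ01 = ∫ u, (2 * u - 2 * δ u) ∂μ01 := by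
    apply integral_congr_ae
    filter_upwards [ae_mem01] with u hu
    exact hinner u hu
  rw [hcongr]
  have hδint : Integrable δ μ01 := (hc.integrableOn_Icc).mono_set Ioc_subset_Icc_self
  have hid : Integrable (fun u : ℝ => 2 * u) μ01 := by
    have : Integrable (fun u : ℝ => u) μ01 :=
      (continuous_id.continuousOn.integrableOn_Icc).mono_set Ioc_subset_Icc_self
    exact this.const_mul 2
  rw [integral_sub hid (hδint.const_mul 2), MeasureTheory.integral_const_mul,
      MeasureTheory.integral_const_mul]
  have hval : ∫ u, (fun u : ℝ => u) u ∂μ01 = 1/2 := by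
    unfold μ01
    rw [← intervalIntegral.integral_of_le zero_le_one]
    simp
  rw [hval]; ring

include hc in
lemma cauchy_schwarz :
    (∫ t, mfun δ t ∂μ01) ^ 2 ≤ ∫ t, mfun δ t * mfun δ t ∂μ01 := by
  set c := ∫ t, mfun δ t ∂μ01 with hc_def
  have hm := int_m hc
  have hm2 : Integrable (fun t => mfun δ t * mfun δ t) μ01 := by
    refine Integrable.mono' (integrable_const 1) (hm.aestronglyMeasurable.mul
      hm.aestronglyMeasurable) ?_
    refine Filter.Eventually.of_forall fun t => ?_
    have := m_abs_le δ t
    rw [Real.norm_eq_abs] at this ⊢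
    rw [abs_mul]
    nlinarith [abs_nonneg (mfun δ t)]
  have key : 0 ≤ ∫ t, (mfun δ t - c) ^ 2 ∂μ01 :=
    integral_nonneg fun t => sq_nonneg _
  have hexp : (fun t => (mfun δ t - c) ^ 2)
      = fun t => (mfun δ t * mfun δ t - (2 * c) * mfun δ t) + c ^ 2 := by
    funext t; ring
  have hcm : Integrable (fun t => 2 * c * mfun δ t) μ01 := hm.const_mul (2 * c)
  have hsub : Integrable (fun t => mfun δ t * mfun δ t - 2 * c * mfun δ t) μ01 :=
    hm2.sub hcm
  rw [hexp, integral_add hsub (integrable_const _),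
      integral_sub hm2 hcm, MeasureTheory.integral_const_mul,
      integral_const] at key
  have huniv : μ01.real Set.univ = 1 := by
    simp [measure_univ]
  rw [huniv] at key
  simp only [one_smul, ← hc_def] at key
  linarith

lemma int_min_prod : Integrable (fun p : ℝ × ℝ => min p.1 p.2) (μ01.prod μ01) := by
  refine Integrable.mono' (integrable_const 1)
    ((continuous_fst.min continuous_snd).aestronglyMeasurable) ?_
  have hprod : μ01.prod μ01 = (volume.prod volume).restrict ((Ioc (0:ℝ) 1) ×ˢ (Ioc (0:ℝ) 1)) := by
    unfold μ01
    exact Measure.prod_restrict _ _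
  rw [hprod]
  filter_upwards [ae_restrict_mem (measurableSet_Ioc.prod measurableSet_Ioc)] with p hp
  obtain ⟨h1, h2⟩ := hp
  rw [Real.norm_eq_abs, abs_le]
  constructor
  · have : (0:ℝ) ≤ min p.1 p.2 := le_min h1.1.le h2.1.le
    linarith
  · exact min_le_of_left_le h1.2

lemma inner_min {u : ℝ} (hu : u ∈ Ioc (0:ℝ) 1) : ∫ v, min u v ∂μ01 = u - u ^ 2 / 2 := by
  unfold μ01
  rw [← intervalIntegral.integral_of_le zero_le_one]
  have hi1 : IntervalIntegrable (fun v => min u v) volume 0 u :=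
    (continuous_const.min continuous_id).intervalIntegrable _ _
  have hi2 : IntervalIntegrable (fun v => min u v) volume u 1 :=
    (continuous_const.min continuous_id).intervalIntegrable _ _
  rw [← intervalIntegral.integral_add_adjacent_intervals hi1 hi2]
  have e1 : ∫ v in (0:ℝ)..u, min u v = ∫ v in (0:ℝ)..u, v := by
    apply intervalIntegral.integral_congr
    intro v hv
    rw [uIcc_of_le hu.1.le] at hv
    exact min_eq_right hv.2
  have e2 : ∫ v in u..(1:ℝ), min u v = ∫ v in u..(1:ℝ), u := by
    apply intervalIntegral.integral_congr
    intro v hv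
    rw [uIcc_of_le hu.2] at hv
    exact min_eq_left hv.1
  rw [e1, e2, integral_id, intervalIntegral.integral_const]
  simp only [smul_eq_mul]
  ring

lemma min_double_integral : ∫ u, (∫ v, min u v ∂μ01) ∂μ01 = 1/3 := by
  have hcongr : ∫ u, (∫ v, min u v ∂μ01) ∂μ01 = ∫ u, (u - u ^ 2 / 2) ∂μ01 := by
    apply integral_congr_ae
    filter_upwards [ae_mem01] with u hu
    exact inner_min hu
  rw [hcongr]
  unfold μ01
  rw [← intervalIntegral.integral_of_le zero_le_one]
  have h1 : IntervalIntegrable (fun u : ℝ => u) volume 0 1 :=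
    (continuous_id).intervalIntegrable _ _
  have h2 : IntervalIntegrable (fun u : ℝ => u ^ 2 / 2) volume 0 1 :=
    ((continuous_pow 2).div_const 2).intervalIntegrable _ _
  rw [intervalIntegral.integral_sub h1 h2]
  have h3 : ∫ u in (0:ℝ)..1, u ^ 2 / 2 = (∫ u in (0:ℝ)..1, u ^ 2) / 2 := by
    simp [intervalIntegral.integral_div]
  rw [integral_id, h3, integral_pow]
  norm_num

include hc hmono hL h1 hb in
lemma copula_double_integral :
    ∫ u, (∫ v, diagCopula δ u v ∂μ01) ∂μ01
      = 1/3 - (∫ t, mfun δ t * mfun δ t ∂μ01) / 2 := by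
  have hInner : ∀ u ∈ Ioc (0:ℝ) 1,
      (∫ v, diagCopula δ u v ∂μ01)
        = (∫ v, min u v ∂μ01) - (∫ t, chi δ u t * mfun δ t ∂μ01) / 2 := by
    intro u hu
    have huI : u ∈ Icc (0:ℝ) 1 := Ioc_subset_Icc_self hu
    have hintmin : Integrable (fun v => min u v) μ01 := by
      refine Integrable.mono' (integrable_const 1)
        ((continuous_const.min continuous_id).aestronglyMeasurable) ?_
      filter_upwards [ae_mem01] with v hv
      rw [Real.norm_eq_abs, abs_le]
      constructor
      · have : (0:ℝ) ≤ min u v := le_min hu.1.le hv.1.le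
        linarith
      · exact min_le_of_left_le hu.2
    have hintg : Integrable (fun v => (∫ t, chi δ u t * chi δ v t ∂μ01)) μ01 := by
      have hI : Integrable (fun p : ℝ × ℝ => chi δ u p.2 * chi δ p.1 p.2)
          (μ01.prod μ01) := by
        refine Integrable.mono' (integrable_const 1)
          ((((chi_meas δ u).comp measurable_snd).aestronglyMeasurable).mul
            (aesm_chi_prod hc)) ?_
        refine Filter.Eventually.of_forall fun p => ?_
        have h1 := chi_nonneg δ u p.2
        have h2 := chi_le_one δ u p.2
        have h3 := chi_nonneg δ p.1 p.2
        have h4 := chi_le_one δ p.1 p.2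
        rw [Real.norm_eq_abs, abs_le]
        constructor <;> nlinarith
      exact hI.integral_prod_left
    calc ∫ v, diagCopula δ u v ∂μ01
        = ∫ v, (min u v - (∫ t, chi δ u t * chi δ v t ∂μ01) / 2) ∂μ01 := by
          apply integral_congr_ae
          filter_upwards [ae_mem01] with v hv
          exact copula_eq hmono hL h1 hb huI (Ioc_subset_Icc_self hv)
      _ = (∫ v, min u v ∂μ01) - ∫ v, (∫ t, chi δ u t * chi δ v t ∂μ01) / 2 ∂μ01 :=
          integral_sub hintmin (hintg.div_const 2)
      _ = (∫ v, min u v ∂μ01) - (∫ v, (∫ t, chi δ u t * chi δ v t ∂μ01) ∂μ01) / 2 := by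
          rw [integral_div]
      _ = (∫ v, min u v ∂μ01) - (∫ t, chi δ u t * mfun δ t ∂μ01) / 2 := by
          rw [stepA hc]
  have hO1 : Integrable (fun u => ∫ v, min u v ∂μ01) μ01 := by
    have := int_min_prod.integral_prod_left
    exact this
  have hO2 : Integrable (fun u => ∫ t, chi δ u t * mfun δ t ∂μ01) μ01 := by
    have hint : Integrable (fun p : ℝ × ℝ => chi δ p.1 p.2 * mfun δ p.2)
        (μ01.prod μ01) := by
      refine Integrable.mono' (integrable_const 1) ?_ ?_
      · exact (aesm_chi_prod hc).mul
          (((int_m hc).aestronglyMeasurable).comp_quasiMeasurePreserving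
            Measure.quasiMeasurePreserving_snd)
      · refine Filter.Eventually.of_forall fun p => ?_
        have h1 := chi_nonneg δ p.1 p.2
        have h2 := chi_le_one δ p.1 p.2
        have h3 := m_abs_le δ p.2
        rw [Real.norm_eq_abs] at h3 ⊢
        rw [abs_mul]
        calc |chi δ p.1 p.2| * |mfun δ p.2| ≤ 1 * 1 := by
              apply mul_le_mul _ h3 (abs_nonneg _) zero_le_one
              rw [abs_le]; constructor <;> linarith
          _ = 1 := by norm_num
    exact hint.integral_prod_left
  calc ∫ u, (∫ v, diagCopula δ u v ∂μ01) ∂μ01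
      = ∫ u, ((∫ v, min u v ∂μ01) - (∫ t, chi δ u t * mfun δ t ∂μ01) / 2) ∂μ01 := by
        apply integral_congr_ae
        filter_upwards [ae_mem01] with u hu
        exact hInner u hu
    _ = (∫ u, (∫ v, min u v ∂μ01) ∂μ01)
        - ∫ u, (∫ t, chi δ u t * mfun δ t ∂μ01) / 2 ∂μ01 :=
        integral_sub hO1 (hO2.div_const 2)
    _ = (∫ u, (∫ v, min u v ∂μ01) ∂μ01)
        - (∫ u, (∫ t, chi δ u t * mfun δ t ∂μ01) ∂μ01) / 2 := by
        rw [integral_div]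
    _ = 1/3 - (∫ t, mfun δ t * mfun δ t ∂μ01) / 2 := by
        rw [min_double_integral, stepB hc]

end Integrals
end DiagAux

theorem diag_copula_integral_upper_bound (δ δ' : ℝ → ℝ) (hδ : SmoothSymDiagonal δ δ')
    (α : ℝ → ℝ) (hα : ∀ u : ℝ, α u = ∫ t in (0:ℝ)..u, δ t) :
    (∫ u in (0:ℝ)..1, ∫ v in (0:ℝ)..1, diagCopula δ u v) ≤
      2 * α 1 - 2 * (α 1) ^ 2 - 1/6 := by
  obtain ⟨hcont, hsm, hL, h0, h1, hb, -, -, -, -⟩ := hδ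
  have hmono := hsm.monotoneOn
  have hAeq : α 1 = ∫ u, δ u ∂DiagAux.μ01 := by
    rw [hα 1, intervalIntegral.integral_of_le zero_le_one]
    rfl
  have hLHS : (∫ u in (0:ℝ)..1, ∫ v in (0:ℝ)..1, diagCopula δ u v)
      = ∫ u, (∫ v, diagCopula δ u v ∂DiagAux.μ01) ∂DiagAux.μ01 := by
    simp only [intervalIntegral.integral_of_le zero_le_one]
    rfl
  rw [hLHS, DiagAux.copula_double_integral hcont hmono hL h1 hb]
  have hCS := DiagAux.cauchy_schwarz (δ := δ) hcont
  have hC := DiagAux.stepC hcont hL h1 hb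
  rw [← hAeq] at hC
  rw [hC] at hCS
  nlinarith [hCS]
end
end

section
/- Let δ be a smooth symmetric diagonal and K_δ(u,v) = min{u, v, (δ(u)+δ(v))/2} its diagonal copula. Then ρ(K_δ) ≤ 1 − (2/3)·(1 − φ(K_δ))², where ρ(K_δ) = 12·∫₀¹∫₀¹ K_δ(u,v) du dv − 3 and φ(K_δ) = 6·∫₀¹ K_δ(u,u) du − 2 = 6·∫₀¹ δ(u) du − 2 (since the diagonal of K_δ is δ). -/
open MeasureTheory Set

noncomputable section

/-- Spearman's rho of a copula. -/
def spearmanRho (C : ℝ → ℝ → ℝ) : ℝ :=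
  12 * (∫ u in (0:ℝ)..1, ∫ v in (0:ℝ)..1, C u v) - 3

/-- Spearman's footrule of a copula. -/
def spearmanFootrule (C : ℝ → ℝ → ℝ) : ℝ :=
  6 * (∫ u in (0:ℝ)..1, C u u) - 2



lemma min_eq_avg (a b : ℝ) : min a b = (a + b - |a - b|)/2 := by
  rcases le_total a b with h | h
  · rw [min_eq_left h, abs_of_nonpos (by linarith)]; ring
  · rw [min_eq_right h, abs_of_nonneg (by linarith)]; ring

lemma sub_min' (p q : ℝ) : p - min p q = max (p - q) 0 := by
  rcases le_total p q with h | h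
  · simp [min_eq_left h, max_eq_right (sub_nonpos.2 h)]
  · rw [min_eq_right h, max_eq_left (sub_nonneg.2 h)]

variable {g : ℝ → ℝ}

lemma g_ii (hc : ContinuousOn g (Icc 0 1)) {s t : ℝ} (hs : s ∈ Icc (0:ℝ) 1)
    (ht : t ∈ Icc (0:ℝ) 1) : IntervalIntegrable g volume s t :=
  (hc.mono (uIcc_subset_Icc hs ht)).intervalIntegrable

def Hfun (g : ℝ → ℝ) (t : ℝ) : ℝ := ∫ v in (0:ℝ)..t, g v

lemma Hcont (hc : ContinuousOn g (Icc 0 1)) : ContinuousOn (Hfun g) (Icc 0 1) := by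
  have h01 : (uIcc (0:ℝ) 1) = Icc 0 1 := uIcc_of_le zero_le_one
  have := intervalIntegral.continuousOn_primitive_interval
    (f := g) (a := (0:ℝ)) (b := 1) (μ := volume)
    (by rw [h01]; exact hc.integrableOn_compact isCompact_Icc)
  rwa [h01] at this

lemma H_sub (hc : ContinuousOn g (Icc 0 1)) {s t : ℝ} (hs : s ∈ Icc (0:ℝ) 1)
    (ht : t ∈ Icc (0:ℝ) 1) : Hfun g t - Hfun g s = ∫ v in s..t, g v :=
  intervalIntegral.integral_interval_sub_left
    (g_ii hc (left_mem_Icc.2 zero_le_one) ht) (g_ii hc (left_mem_Icc.2 zero_le_one) hs)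

lemma intconst (a b c : ℝ) : (∫ _ in a..b, c) = (b - a) * c := by
  rw [intervalIntegral.integral_const, smul_eq_mul]

lemma int_lin (a b u : ℝ) : (∫ v in a..b, (u - v)) = (b-a)*u - (b^2-a^2)/2 := by
  rw [intervalIntegral.integral_sub intervalIntegrable_const
    intervalIntegral.intervalIntegrable_id, intconst, integral_id]

lemma int_lin' (a b u : ℝ) : (∫ v in a..b, (v - u)) = (b^2-a^2)/2 - (b-a)*u := by
  rw [intervalIntegral.integral_sub intervalIntegral.intervalIntegrable_id
    intervalIntegrable_const, intconst, integral_id]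

lemma H_le (hc : ContinuousOn g (Icc 0 1)) (hb : ∀ u ∈ Icc (0:ℝ) 1, 0 ≤ g u ∧ g u ≤ u ∧ g u ≤ 1 - u)
    {t : ℝ} (ht : t ∈ Icc (0:ℝ) 1) : Hfun g t ≤ t^2/2 := by
  have h0 : (0:ℝ) ∈ Icc (0:ℝ) 1 := left_mem_Icc.2 zero_le_one
  have : Hfun g t ≤ ∫ v in (0:ℝ)..t, v := by
    apply intervalIntegral.integral_mono_on ht.1 (g_ii hc h0 ht)
      intervalIntegral.intervalIntegrable_id
    intro v hv
    exact (hb v ⟨hv.1, hv.2.trans ht.2⟩).2.1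
  rw [integral_id] at this
  nlinarith

lemma H_ge (hc : ContinuousOn g (Icc 0 1)) (hb : ∀ u ∈ Icc (0:ℝ) 1, 0 ≤ g u ∧ g u ≤ u ∧ g u ≤ 1 - u)
    {t : ℝ} (ht : t ∈ Icc (0:ℝ) 1) : Hfun g 1 - (1-t)^2/2 ≤ Hfun g t := by
  have h1 : (1:ℝ) ∈ Icc (0:ℝ) 1 := right_mem_Icc.2 zero_le_one
  have e : Hfun g 1 - Hfun g t = ∫ v in t..1, g v := H_sub hc ht h1
  have : (∫ v in t..1, g v) ≤ ∫ v in t..1, (1 - v) := by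
    apply intervalIntegral.integral_mono_on ht.2 (g_ii hc ht h1)
      (by apply Continuous.intervalIntegrable; continuity)
    intro v hv
    exact (hb v ⟨ht.1.trans hv.1, hv.2⟩).2.2
  rw [int_lin t 1 1] at this
  nlinarith

lemma G_nonneg (hc : ContinuousOn g (Icc 0 1)) (hb : ∀ u ∈ Icc (0:ℝ) 1, 0 ≤ g u ∧ g u ≤ u ∧ g u ≤ 1 - u) :
    0 ≤ Hfun g 1 :=
  intervalIntegral.integral_nonneg zero_le_one (fun v hv => (hb v hv).1)

lemma G_le (hc : ContinuousOn g (Icc 0 1)) (hb : ∀ u ∈ Icc (0:ℝ) 1, 0 ≤ g u ∧ g u ≤ u ∧ g u ≤ 1 - u) :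
    Hfun g 1 ≤ 1/4 := by
  have h0 : (0:ℝ) ∈ Icc (0:ℝ) 1 := left_mem_Icc.2 zero_le_one
  have h1 : (1:ℝ) ∈ Icc (0:ℝ) 1 := right_mem_Icc.2 zero_le_one
  have hh : (1/2:ℝ) ∈ Icc (0:ℝ) 1 := by norm_num
  have e : Hfun g (1/2) + ∫ v in (1/2:ℝ)..1, g v = Hfun g 1 :=
    intervalIntegral.integral_add_adjacent_intervals (g_ii hc h0 hh) (g_ii hc hh h1)
  have b1 : Hfun g (1/2) ≤ (1/2:ℝ)^2/2 := H_le hc hb hh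
  have b2 : (∫ v in (1/2:ℝ)..1, g v) ≤ ∫ v in (1/2:ℝ)..1, (1 - v) := by
    apply intervalIntegral.integral_mono_on (by norm_num) (g_ii hc hh h1)
      (by apply Continuous.intervalIntegrable; continuity)
    intro v hv
    exact (hb v ⟨le_trans (by norm_num) hv.1, hv.2⟩).2.2
  have : (∫ v in (1/2:ℝ)..1, (1 - v)) = 1/8 := by
    rw [int_lin]; norm_num
  rw [this] at b2
  norm_num at b1 ⊢
  linarith

def Dfun (g : ℝ → ℝ) (u v : ℝ) : ℝ := max ((g u + g v - |u - v|)/2) 0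

lemma raw_cont' (hc : ContinuousOn g (Icc 0 1)) (u : ℝ) :
    ContinuousOn (fun v => (g u + g v - |u - v|)/2) (Icc 0 1) :=
  ((continuousOn_const.add hc).sub
    ((continuous_const.sub continuous_id).abs).continuousOn).div_const 2

lemma Dcont (hc : ContinuousOn g (Icc 0 1)) (u : ℝ) :
    ContinuousOn (fun v => Dfun g u v) (Icc 0 1) :=
  (raw_cont' hc u).sup continuousOn_const

lemma D_ii (hc : ContinuousOn g (Icc 0 1)) (u : ℝ) {s t : ℝ} (hs : s ∈ Icc (0:ℝ) 1)
    (ht : t ∈ Icc (0:ℝ) 1) : IntervalIntegrable (fun v => Dfun g u v) volume s t :=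
  ((Dcont hc u).mono (uIcc_subset_Icc hs ht)).intervalIntegrable

lemma raw_ii (hc : ContinuousOn g (Icc 0 1)) (u : ℝ) {s t : ℝ} (hs : s ∈ Icc (0:ℝ) 1)
    (ht : t ∈ Icc (0:ℝ) 1) : IntervalIntegrable (fun v => (g u + g v - |u - v|)/2) volume s t :=
  ((raw_cont' hc u).mono (uIcc_subset_Icc hs ht)).intervalIntegrable

lemma abs_int {a b u : ℝ} (hau : a ≤ u) (hub : u ≤ b) :
    (∫ v in a..b, |u - v|) = ((u-a)^2 + (b-u)^2)/2 := by
  have i1 : (∫ v in a..u, |u - v|) = ∫ v in a..u, (u - v) := by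
    apply intervalIntegral.integral_congr
    intro v hv
    rw [uIcc_of_le hau] at hv
    exact abs_of_nonneg (by linarith [hv.2])
  have i2 : (∫ v in u..b, |u - v|) = ∫ v in u..b, (v - u) := by
    apply intervalIntegral.integral_congr
    intro v hv
    rw [uIcc_of_le hub] at hv
    show |u - v| = v - u
    rw [abs_sub_comm]
    exact abs_of_nonneg (by linarith [hv.1])
  have habs : Continuous fun v : ℝ => |u - v| := (continuous_const.sub continuous_id).abs
  have ii1 : IntervalIntegrable (fun v => |u - v|) volume a u := habs.intervalIntegrable a u
  have ii2 : IntervalIntegrable (fun v => |u - v|) volume u b := habs.intervalIntegrable u b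
  have e := intervalIntegral.integral_add_adjacent_intervals ii1 ii2
  rw [i1, i2, int_lin a u u, int_lin' u b u] at e
  rw [← e]; ring

lemma inner_lb (hc : ContinuousOn g (Icc 0 1)) {u ℓ : ℝ} (hu : u ∈ Icc (0:ℝ) 1)
    (hl0 : 0 ≤ ℓ) (hl1 : ℓ ≤ 1) :
    (g u * (min (u+ℓ) 1 - max (u-ℓ) 0) + (Hfun g (min (u+ℓ) 1) - Hfun g (max (u-ℓ) 0))
      - ((u - max (u-ℓ) 0)^2 + (min (u+ℓ) 1 - u)^2)/2)/2
      ≤ ∫ v in (0:ℝ)..1, Dfun g u v := by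
  set a := max (u-ℓ) 0 with ha_def
  set b := min (u+ℓ) 1 with hb_def
  have ha0 : 0 ≤ a := le_max_right _ _
  have hau : a ≤ u := max_le (by linarith [hu.1]) hu.1
  have hub : u ≤ b := le_min (by linarith) hu.2
  have hb1 : b ≤ 1 := min_le_right _ _
  have hamem : a ∈ Icc (0:ℝ) 1 := ⟨ha0, hau.trans (hu.2)⟩
  have hbmem : b ∈ Icc (0:ℝ) 1 := ⟨ha0.trans (hau.trans hub), hb1⟩
  have h0 : (0:ℝ) ∈ Icc (0:ℝ) 1 := left_mem_Icc.2 zero_le_one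
  have h1 : (1:ℝ) ∈ Icc (0:ℝ) 1 := right_mem_Icc.2 zero_le_one
  have hab : a ≤ b := hau.trans hub
  -- split
  have e1 := intervalIntegral.integral_add_adjacent_intervals
    (D_ii hc u h0 hamem) (D_ii hc u hamem hbmem)
  have e2 := intervalIntegral.integral_add_adjacent_intervals
    (D_ii hc u h0 hbmem) (D_ii hc u hbmem h1)
  have pos1 : 0 ≤ ∫ v in (0:ℝ)..a, Dfun g u v :=
    intervalIntegral.integral_nonneg ha0 (fun v _ => le_max_right _ _)
  have pos2 : 0 ≤ ∫ v in b..(1:ℝ), Dfun g u v :=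
    intervalIntegral.integral_nonneg hb1 (fun v _ => le_max_right _ _)
  have mid : (∫ v in a..b, (g u + g v - |u - v|)/2) ≤ ∫ v in a..b, Dfun g u v :=
    intervalIntegral.integral_mono_on hab (raw_ii hc u hamem hbmem) (D_ii hc u hamem hbmem)
      (fun v _ => le_max_left _ _)
  -- evaluate the middle integral
  have hgii : IntervalIntegrable g volume a b := g_ii hc hamem hbmem
  have habs : Continuous fun v : ℝ => |u - v| := (continuous_const.sub continuous_id).abs
  have ev : (∫ v in a..b, (g u + g v - |u - v|)/2)
      = (g u * (b - a) + (Hfun g b - Hfun g a) - ((u-a)^2 + (b-u)^2)/2)/2 := by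
    rw [intervalIntegral.integral_div]
    rw [intervalIntegral.integral_sub (intervalIntegrable_const.add hgii)
      (habs.intervalIntegrable a b)]
    rw [intervalIntegral.integral_add intervalIntegrable_const hgii]
    rw [intconst, abs_int hau hub, ← H_sub hc hamem hbmem]
    ring
  rw [ev] at mid
  linarith [e1, e2, pos1, pos2, mid]

lemma min1 (u ℓ : ℝ) : u - max (u-ℓ) 0 = ℓ - max (ℓ-u) 0 := by
  rcases le_total u ℓ with h | h
  · rw [max_eq_right (by linarith), max_eq_left (by linarith)]; ring
  · rw [max_eq_left (by linarith), max_eq_right (by linarith)]; ring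

lemma min2 (u ℓ : ℝ) : min (u+ℓ) 1 - u = ℓ - max (ℓ-(1-u)) 0 := by
  rcases le_total (u+ℓ) 1 with h | h
  · rw [min_eq_left h, max_eq_right (by linarith)]; ring
  · rw [min_eq_right h, max_eq_left (by linarith)]; ring

lemma contmax (ℓ : ℝ) : Continuous fun u : ℝ => u * max (ℓ-u) 0 :=
  continuous_id.mul ((continuous_const.sub continuous_id).max continuous_const)

lemma J1 {ℓ : ℝ} (hl0 : 0 ≤ ℓ) (hl1 : ℓ ≤ 1) :
    (∫ u in (0:ℝ)..1, u * max (ℓ-u) 0) = ℓ^3/6 := by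
  have e := intervalIntegral.integral_add_adjacent_intervals
    ((contmax ℓ).intervalIntegrable (μ := volume) 0 ℓ) ((contmax ℓ).intervalIntegrable (μ := volume) ℓ 1)
  have p1 : (∫ u in (0:ℝ)..ℓ, u * max (ℓ-u) 0) = ∫ u in (0:ℝ)..ℓ, (ℓ*u - u^2) := by
    apply intervalIntegral.integral_congr
    intro u hu; rw [uIcc_of_le hl0] at hu
    show u * max (ℓ-u) 0 = ℓ*u - u^2
    rw [max_eq_left (by linarith [hu.2])]; ring
  have p2 : (∫ u in ℓ..(1:ℝ), u * max (ℓ-u) 0) = 0 := by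
    have e0 : (∫ u in ℓ..(1:ℝ), u * max (ℓ-u) 0) = ∫ u in ℓ..(1:ℝ), (0:ℝ) := by
      apply intervalIntegral.integral_congr
      intro u hu; rw [uIcc_of_le hl1] at hu
      show u * max (ℓ-u) 0 = 0
      rw [max_eq_right (by linarith [hu.1])]; ring
    rw [e0, intervalIntegral.integral_zero]
  have p3 : (∫ u in (0:ℝ)..ℓ, (ℓ*u - u^2)) = ℓ^3/6 := by
    rw [intervalIntegral.integral_sub ((intervalIntegral.intervalIntegrable_id).const_mul ℓ)
      (intervalIntegral.intervalIntegrable_pow 2),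
      intervalIntegral.integral_const_mul, integral_id, integral_pow]
    ring
  rw [p1, p3, p2] at e
  linarith

lemma J2 {ℓ : ℝ} (hl0 : 0 ≤ ℓ) (hl1 : ℓ ≤ 1) :
    (∫ u in (0:ℝ)..1, (1-u) * max (ℓ-(1-u)) 0) = ℓ^3/6 := by
  have := intervalIntegral.integral_comp_sub_left (a := (0:ℝ)) (b := 1)
    (fun w => w * max (ℓ-w) 0) 1
  norm_num at this
  rw [this, J1 hl0 hl1]

lemma contba (ℓ : ℝ) : Continuous fun u : ℝ => min (u+ℓ) 1 - max (u-ℓ) 0 :=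
  ((continuous_id.add continuous_const).min continuous_const).sub
    ((continuous_id.sub continuous_const).max continuous_const)

lemma P1 (hc : ContinuousOn g (Icc 0 1))
    (hb : ∀ u ∈ Icc (0:ℝ) 1, 0 ≤ g u ∧ g u ≤ u ∧ g u ≤ 1 - u)
    {ℓ : ℝ} (hl0 : 0 ≤ ℓ) (hl1 : ℓ ≤ 1) :
    2*ℓ*Hfun g 1 - ℓ^3/3
      ≤ ∫ u in (0:ℝ)..1, g u * (min (u+ℓ) 1 - max (u-ℓ) 0) := by
  have h0 : (0:ℝ) ∈ Icc (0:ℝ) 1 := left_mem_Icc.2 zero_le_one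
  have h1 : (1:ℝ) ∈ Icc (0:ℝ) 1 := right_mem_Icc.2 zero_le_one
  have hgii : IntervalIntegrable g volume 0 1 := g_ii hc h0 h1
  have iiL : IntervalIntegrable
      (fun u => 2*ℓ*g u - u*max (ℓ-u) 0 - (1-u)*max (ℓ-(1-u)) 0) volume 0 1 := by
    apply IntervalIntegrable.sub
    apply IntervalIntegrable.sub (hgii.const_mul (2*ℓ)) ((contmax ℓ).intervalIntegrable 0 1)
    · show IntervalIntegrable (fun u : ℝ => (1-u) * max (ℓ-(1-u)) 0) volume 0 1
      apply Continuous.intervalIntegrable; continuity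
  have iiR : IntervalIntegrable (fun u => g u * (min (u+ℓ) 1 - max (u-ℓ) 0)) volume 0 1 := by
    apply ContinuousOn.intervalIntegrable
    apply ContinuousOn.mono _ (uIcc_subset_Icc h0 h1)
    exact hc.mul (contba ℓ).continuousOn
  have mono : (∫ u in (0:ℝ)..1, (2*ℓ*g u - u*max (ℓ-u) 0 - (1-u)*max (ℓ-(1-u)) 0))
      ≤ ∫ u in (0:ℝ)..1, g u * (min (u+ℓ) 1 - max (u-ℓ) 0) := by
    apply intervalIntegral.integral_mono_on zero_le_one iiL iiR
    intro u hu
    have hgu := hb u hu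
    have hA : 0 ≤ max (ℓ-u) 0 := le_max_right _ _
    have hB : 0 ≤ max (ℓ-(1-u)) 0 := le_max_right _ _
    have e : min (u+ℓ) 1 - max (u-ℓ) 0 = (ℓ - max (ℓ-(1-u)) 0) + (ℓ - max (ℓ-u) 0) := by
      have := min1 u ℓ; have := min2 u ℓ; linarith
    rw [e]
    have m1 : g u * max (ℓ-u) 0 ≤ u * max (ℓ-u) 0 :=
      mul_le_mul_of_nonneg_right hgu.2.1 hA
    have m2 : g u * max (ℓ-(1-u)) 0 ≤ (1-u) * max (ℓ-(1-u)) 0 :=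
      mul_le_mul_of_nonneg_right hgu.2.2 hB
    nlinarith [hgu.1]
  have ii3 : IntervalIntegrable (fun u : ℝ => (1-u) * max (ℓ-(1-u)) 0) volume 0 1 := by
    apply Continuous.intervalIntegrable; continuity
  have ev : (∫ u in (0:ℝ)..1, (2*ℓ*g u - u*max (ℓ-u) 0 - (1-u)*max (ℓ-(1-u)) 0))
      = 2*ℓ*Hfun g 1 - ℓ^3/6 - ℓ^3/6 := by
    rw [intervalIntegral.integral_sub
      (IntervalIntegrable.sub (hgii.const_mul (2*ℓ)) ((contmax ℓ).intervalIntegrable 0 1)) ii3,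
      intervalIntegral.integral_sub (hgii.const_mul (2*ℓ)) ((contmax ℓ).intervalIntegrable 0 1),
      intervalIntegral.integral_const_mul, J1 hl0 hl1, J2 hl0 hl1]
    rfl
  rw [ev] at mono
  linarith

lemma Hii (hc : ContinuousOn g (Icc 0 1)) {s t : ℝ} (hs : s ∈ Icc (0:ℝ) 1)
    (ht : t ∈ Icc (0:ℝ) 1) : IntervalIntegrable (Hfun g) volume s t :=
  ((Hcont hc).mono (uIcc_subset_Icc hs ht)).intervalIntegrable

lemma P2 (hc : ContinuousOn g (Icc 0 1))
    (hb : ∀ u ∈ Icc (0:ℝ) 1, 0 ≤ g u ∧ g u ≤ u ∧ g u ≤ 1 - u)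
    {ℓ : ℝ} (hl0 : 0 ≤ ℓ) (hl2 : ℓ ≤ 1/2) :
    2*ℓ*Hfun g 1 - ℓ^3/3
      ≤ ∫ u in (0:ℝ)..1, (Hfun g (min (u+ℓ) 1) - Hfun g (max (u-ℓ) 0)) := by
  have hl1 : ℓ ≤ 1 := by linarith
  have h0 : (0:ℝ) ∈ Icc (0:ℝ) 1 := left_mem_Icc.2 zero_le_one
  have h1 : (1:ℝ) ∈ Icc (0:ℝ) 1 := right_mem_Icc.2 zero_le_one
  have hlmem : ℓ ∈ Icc (0:ℝ) 1 := ⟨hl0, hl1⟩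
  have hlmem' : (1-ℓ) ∈ Icc (0:ℝ) 1 := ⟨by linarith, by linarith⟩
  have cb : ContinuousOn (fun u => Hfun g (min (u+ℓ) 1)) (Icc 0 1) :=
    (Hcont hc).comp ((continuous_id.add continuous_const).min continuous_const).continuousOn
      (fun u hu => ⟨le_min (by linarith [hu.1]) zero_le_one, min_le_right _ _⟩)
  have ca : ContinuousOn (fun u => Hfun g (max (u-ℓ) 0)) (Icc 0 1) :=
    (Hcont hc).comp ((continuous_id.sub continuous_const).max continuous_const).continuousOn
      (fun u hu => ⟨le_max_right _ _, max_le (by linarith [hu.2]) zero_le_one⟩)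
  have cbii : ∀ s ∈ Icc (0:ℝ) 1, ∀ t ∈ Icc (0:ℝ) 1,
      IntervalIntegrable (fun u => Hfun g (min (u+ℓ) 1)) volume s t :=
    fun s hs t ht => (cb.mono (uIcc_subset_Icc hs ht)).intervalIntegrable
  have caii : ∀ s ∈ Icc (0:ℝ) 1, ∀ t ∈ Icc (0:ℝ) 1,
      IntervalIntegrable (fun u => Hfun g (max (u-ℓ) 0)) volume s t :=
    fun s hs t ht => (ca.mono (uIcc_subset_Icc hs ht)).intervalIntegrable
  -- ∫ H(min(u+ℓ)1)
  have eb := intervalIntegral.integral_add_adjacent_intervals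
    (cbii 0 h0 (1-ℓ) hlmem') (cbii (1-ℓ) hlmem' 1 h1)
  have eb1 : (∫ u in (0:ℝ)..(1-ℓ), Hfun g (min (u+ℓ) 1)) = ∫ t in ℓ..(1:ℝ), Hfun g t := by
    have ec : (∫ u in (0:ℝ)..(1-ℓ), Hfun g (min (u+ℓ) 1))
        = ∫ u in (0:ℝ)..(1-ℓ), Hfun g (u+ℓ) := by
      apply intervalIntegral.integral_congr
      intro u hu; rw [uIcc_of_le (by linarith : (0:ℝ) ≤ 1-ℓ)] at hu
      show Hfun g (min (u+ℓ) 1) = Hfun g (u+ℓ)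
      rw [min_eq_left (by linarith [hu.2])]
    rw [ec, intervalIntegral.integral_comp_add_right (Hfun g) ℓ]
    norm_num
  have eb2 : (∫ u in (1-ℓ:ℝ)..1, Hfun g (min (u+ℓ) 1)) = ℓ * Hfun g 1 := by
    have ec : (∫ u in (1-ℓ:ℝ)..1, Hfun g (min (u+ℓ) 1))
        = ∫ u in (1-ℓ:ℝ)..1, Hfun g 1 := by
      apply intervalIntegral.integral_congr
      intro u hu; rw [uIcc_of_le (by linarith : (1-ℓ:ℝ) ≤ 1)] at hu
      show Hfun g (min (u+ℓ) 1) = Hfun g 1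
      rw [min_eq_right (by linarith [hu.1])]
    rw [ec, intconst]; ring
  -- ∫ H(max(u-ℓ)0)
  have ea := intervalIntegral.integral_add_adjacent_intervals
    (caii 0 h0 ℓ hlmem) (caii ℓ hlmem 1 h1)
  have ea1 : (∫ u in (0:ℝ)..ℓ, Hfun g (max (u-ℓ) 0)) = 0 := by
    have ec : (∫ u in (0:ℝ)..ℓ, Hfun g (max (u-ℓ) 0)) = ∫ u in (0:ℝ)..ℓ, (0:ℝ) := by
      apply intervalIntegral.integral_congr
      intro u hu; rw [uIcc_of_le hl0] at hu
      show Hfun g (max (u-ℓ) 0) = 0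
      rw [max_eq_right (by linarith [hu.2])]
      exact intervalIntegral.integral_same
    rw [ec, intervalIntegral.integral_zero]
  have ea2 : (∫ u in ℓ..(1:ℝ), Hfun g (max (u-ℓ) 0)) = ∫ t in (0:ℝ)..(1-ℓ), Hfun g t := by
    have ec : (∫ u in ℓ..(1:ℝ), Hfun g (max (u-ℓ) 0))
        = ∫ u in ℓ..(1:ℝ), Hfun g (u-ℓ) := by
      apply intervalIntegral.integral_congr
      intro u hu; rw [uIcc_of_le hl1] at hu
      show Hfun g (max (u-ℓ) 0) = Hfun g (u-ℓ)
      rw [max_eq_left (by linarith [hu.1])]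
    rw [ec, intervalIntegral.integral_comp_sub_right (Hfun g) ℓ]
    norm_num
  -- rearrange: ∫ (Hb - Ha) = ℓ G + ∫_{1-ℓ}^1 H - ∫_0^ℓ H
  have es1 := intervalIntegral.integral_add_adjacent_intervals
    (Hii hc hlmem hlmem') (Hii hc hlmem' h1)
  have es2 := intervalIntegral.integral_add_adjacent_intervals
    (Hii hc h0 hlmem) (Hii hc hlmem hlmem')
  have etot : (∫ u in (0:ℝ)..1, (Hfun g (min (u+ℓ) 1) - Hfun g (max (u-ℓ) 0)))
      = ℓ * Hfun g 1 + (∫ t in (1-ℓ:ℝ)..1, Hfun g t) - ∫ t in (0:ℝ)..ℓ, Hfun g t := by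
    rw [intervalIntegral.integral_sub (cbii 0 h0 1 h1) (caii 0 h0 1 h1), ← eb, ← ea,
      eb1, eb2, ea1, ea2, ← es1, ← es2]
    ring
  -- bounds
  have c4 : (∫ t in (0:ℝ)..ℓ, Hfun g t) ≤ ℓ^3/6 := by
    have mono : (∫ t in (0:ℝ)..ℓ, Hfun g t) ≤ ∫ t in (0:ℝ)..ℓ, t^2/2 := by
      apply intervalIntegral.integral_mono_on hl0 (Hii hc h0 hlmem)
        ((show Continuous fun t : ℝ => t^2/2 by fun_prop).intervalIntegrable _ _)
      intro t ht
      exact H_le hc hb ⟨ht.1, ht.2.trans hl1⟩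
    have ev : (∫ t in (0:ℝ)..ℓ, t^2/2) = ℓ^3/6 := by
      rw [intervalIntegral.integral_div, integral_pow]; norm_num; ring
    linarith
  have c5 : ℓ * Hfun g 1 - ℓ^3/6 ≤ ∫ t in (1-ℓ:ℝ)..1, Hfun g t := by
    have mono : (∫ t in (1-ℓ:ℝ)..1, (Hfun g 1 - (1-t)^2/2)) ≤ ∫ t in (1-ℓ:ℝ)..1, Hfun g t := by
      apply intervalIntegral.integral_mono_on (by linarith)
        ((show Continuous fun t : ℝ => Hfun g 1 - (1-t)^2/2 by fun_prop).intervalIntegrable _ _)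
        (Hii hc hlmem' h1)
      intro t ht
      exact H_ge hc hb ⟨by linarith [ht.1], ht.2⟩
    have ev : (∫ t in (1-ℓ:ℝ)..1, (Hfun g 1 - (1-t)^2/2)) = ℓ * Hfun g 1 - ℓ^3/6 := by
      rw [intervalIntegral.integral_sub intervalIntegrable_const
        ((show Continuous fun t : ℝ => (1-t)^2/2 by fun_prop).intervalIntegrable _ _),
        intconst]
      have : (∫ t in (1-ℓ:ℝ)..1, (1-t)^2/2) = ℓ^3/6 := by
        rw [intervalIntegral.integral_div]
        have := intervalIntegral.integral_comp_sub_left (a := (1-ℓ:ℝ)) (b := 1)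
          (fun w => w^2) 1
        norm_num at this
        rw [this]; ring
      rw [this]; ring
    linarith
  rw [etot]
  linarith

lemma P3 {ℓ : ℝ} (hl0 : 0 ≤ ℓ) (hl1 : ℓ ≤ 1) :
    (∫ u in (0:ℝ)..1, (u - max (u-ℓ) 0)^2) = ℓ^2 - 2*ℓ^3/3 := by
  have cont : Continuous fun u : ℝ => (u - max (u-ℓ) 0)^2 := by fun_prop
  have e := intervalIntegral.integral_add_adjacent_intervals
    (cont.intervalIntegrable (μ := volume) 0 ℓ) (cont.intervalIntegrable (μ := volume) ℓ 1)
  have p1 : (∫ u in (0:ℝ)..ℓ, (u - max (u-ℓ) 0)^2) = ∫ u in (0:ℝ)..ℓ, u^2 := by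
    apply intervalIntegral.integral_congr
    intro u hu; rw [uIcc_of_le hl0] at hu
    show (u - max (u-ℓ) 0)^2 = u^2
    rw [max_eq_right (by linarith [hu.2])]; ring
  have p2 : (∫ u in ℓ..(1:ℝ), (u - max (u-ℓ) 0)^2) = ∫ u in ℓ..(1:ℝ), ℓ^2 := by
    apply intervalIntegral.integral_congr
    intro u hu; rw [uIcc_of_le hl1] at hu
    show (u - max (u-ℓ) 0)^2 = ℓ^2
    rw [max_eq_left (by linarith [hu.1])]; ring
  rw [p1, p2, integral_pow, intconst] at e
  rw [← e]; ring

lemma P4 {ℓ : ℝ} (hl0 : 0 ≤ ℓ) (hl1 : ℓ ≤ 1) :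
    (∫ u in (0:ℝ)..1, (min (u+ℓ) 1 - u)^2) = ℓ^2 - 2*ℓ^3/3 := by
  have cont : Continuous fun u : ℝ => (min (u+ℓ) 1 - u)^2 := by fun_prop
  have e := intervalIntegral.integral_add_adjacent_intervals
    (cont.intervalIntegrable (μ := volume) 0 (1-ℓ)) (cont.intervalIntegrable (μ := volume) (1-ℓ) 1)
  have p1 : (∫ u in (0:ℝ)..(1-ℓ), (min (u+ℓ) 1 - u)^2) = ∫ u in (0:ℝ)..(1-ℓ), ℓ^2 := by
    apply intervalIntegral.integral_congr
    intro u hu; rw [uIcc_of_le (by linarith : (0:ℝ) ≤ 1-ℓ)] at hu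
    show (min (u+ℓ) 1 - u)^2 = ℓ^2
    rw [min_eq_left (by linarith [hu.2])]; ring
  have p2 : (∫ u in (1-ℓ:ℝ)..1, (min (u+ℓ) 1 - u)^2) = ∫ u in (1-ℓ:ℝ)..1, (1-u)^2 := by
    apply intervalIntegral.integral_congr
    intro u hu; rw [uIcc_of_le (by linarith : (1-ℓ:ℝ) ≤ 1)] at hu
    show (min (u+ℓ) 1 - u)^2 = (1-u)^2
    rw [min_eq_right (by linarith [hu.1])]
  have p3 : (∫ u in (1-ℓ:ℝ)..1, (1-u)^2) = ℓ^3/3 := by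
    have := intervalIntegral.integral_comp_sub_left (a := (1-ℓ:ℝ)) (b := 1) (fun w => w^2) 1
    norm_num at this
    rw [this]
  rw [p1, p2, p3, intconst] at e
  rw [← e]; ring

lemma ID_ii (hc : ContinuousOn g (Icc 0 1))
    (hlip : ∀ u ∈ Icc (0:ℝ) 1, ∀ v ∈ Icc (0:ℝ) 1, |g u - g v| ≤ 3 * |u - v|) :
    IntervalIntegrable (fun u => ∫ v in (0:ℝ)..1, Dfun g u v) volume 0 1 := by
  have h0 : (0:ℝ) ∈ Icc (0:ℝ) 1 := left_mem_Icc.2 zero_le_one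
  have h1 : (1:ℝ) ∈ Icc (0:ℝ) 1 := right_mem_Icc.2 zero_le_one
  have key : ∀ u ∈ Icc (0:ℝ) 1, ∀ u' ∈ Icc (0:ℝ) 1,
      dist (∫ v in (0:ℝ)..1, Dfun g u v) (∫ v in (0:ℝ)..1, Dfun g u' v)
        ≤ (2:NNReal) * dist u u' := by
    intro u hu u' hu'
    rw [Real.dist_eq, Real.dist_eq,
      ← intervalIntegral.integral_sub (D_ii hc u h0 h1) (D_ii hc u' h0 h1)]
    have bnd : ∀ v ∈ uIoc (0:ℝ) 1, ‖Dfun g u v - Dfun g u' v‖ ≤ 2 * |u - u'| := by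
      intro v hv
      rw [uIoc_of_le zero_le_one] at hv
      have hvmem : v ∈ Icc (0:ℝ) 1 := ⟨le_of_lt hv.1, hv.2⟩
      rw [Real.norm_eq_abs]
      have step1 : |Dfun g u v - Dfun g u' v|
          ≤ |(g u + g v - |u - v|)/2 - (g u' + g v - |u' - v|)/2| :=
        abs_max_sub_max_le_abs _ _ _
      have e : (g u + g v - |u - v|)/2 - (g u' + g v - |u' - v|)/2
          = ((g u - g u') + (|u' - v| - |u - v|))/2 := by ring
      have b1 : |g u - g u'| ≤ 3 * |u - u'| := hlip u hu u' hu'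
      have b2 : |(|u' - v| - |u - v|)| ≤ |u - u'| := by
        have := abs_abs_sub_abs_le_abs_sub (u' - v) (u - v)
        have e2 : (u' - v) - (u - v) = -(u - u') := by ring
        rw [e2, abs_neg] at this
        exact this
      calc |Dfun g u v - Dfun g u' v|
          ≤ |((g u - g u') + (|u' - v| - |u - v|))/2| := by rw [← e]; exact step1
        _ ≤ (|g u - g u'| + |(|u' - v| - |u - v|)|)/2 := by
            have := abs_add_le (g u - g u') (|u' - v| - |u - v|)
            rw [abs_div, abs_two]
            linarith
        _ ≤ 2 * |u - u'| := by linarith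
    have := intervalIntegral.norm_integral_le_of_norm_le_const bnd
    rw [Real.norm_eq_abs] at this
    simpa using this.trans (by norm_num)
  have lip : LipschitzOnWith 2 (fun u => ∫ v in (0:ℝ)..1, Dfun g u v) (Icc 0 1) :=
    LipschitzOnWith.of_dist_le_mul key
  exact (lip.continuousOn.mono (uIcc_subset_Icc h0 h1)).intervalIntegrable

lemma core (hc : ContinuousOn g (Icc 0 1))
    (hb : ∀ u ∈ Icc (0:ℝ) 1, 0 ≤ g u ∧ g u ≤ u ∧ g u ≤ 1 - u)
    (hlip : ∀ u ∈ Icc (0:ℝ) 1, ∀ v ∈ Icc (0:ℝ) 1, |g u - g v| ≤ 3 * |u - v|) :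
    2 * (Hfun g 1)^2 ≤ ∫ u in (0:ℝ)..1, ∫ v in (0:ℝ)..1, Dfun g u v := by
  have h0 : (0:ℝ) ∈ Icc (0:ℝ) 1 := left_mem_Icc.2 zero_le_one
  have h1 : (1:ℝ) ∈ Icc (0:ℝ) 1 := right_mem_Icc.2 zero_le_one
  set G := Hfun g 1 with hG
  set ℓ := 2*G with hld
  have hG0 : 0 ≤ G := G_nonneg hc hb
  have hG4 : G ≤ 1/4 := G_le hc hb
  have hl0 : 0 ≤ ℓ := by simp [hld]; linarith
  have hl2 : ℓ ≤ 1/2 := by simp [hld]; linarith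
  have hl1 : ℓ ≤ 1 := by linarith
  -- continuity pieces
  have cb : ContinuousOn (fun u => Hfun g (min (u+ℓ) 1)) (Icc 0 1) :=
    (Hcont hc).comp ((continuous_id.add continuous_const).min continuous_const).continuousOn
      (fun u hu => ⟨le_min (by linarith [hu.1]) zero_le_one, min_le_right _ _⟩)
  have ca : ContinuousOn (fun u => Hfun g (max (u-ℓ) 0)) (Icc 0 1) :=
    (Hcont hc).comp ((continuous_id.sub continuous_const).max continuous_const).continuousOn
      (fun u hu => ⟨le_max_right _ _, max_le (by linarith [hu.2]) zero_le_one⟩)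
  have Aii : IntervalIntegrable (fun u => g u * (min (u+ℓ) 1 - max (u-ℓ) 0)) volume 0 1 :=
    ((hc.mul (contba ℓ).continuousOn).mono (uIcc_subset_Icc h0 h1)).intervalIntegrable
  have Bii : IntervalIntegrable
      (fun u => Hfun g (min (u+ℓ) 1) - Hfun g (max (u-ℓ) 0)) volume 0 1 :=
    (((cb.sub ca)).mono (uIcc_subset_Icc h0 h1)).intervalIntegrable
  have C1c : Continuous fun u : ℝ => (u - max (u-ℓ) 0)^2 := by fun_prop
  have C2c : Continuous fun u : ℝ => (min (u+ℓ) 1 - u)^2 := by fun_prop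
  have C1ii : IntervalIntegrable (fun u : ℝ => (u - max (u-ℓ) 0)^2) volume 0 1 :=
    C1c.intervalIntegrable 0 1
  have C2ii : IntervalIntegrable (fun u : ℝ => (min (u+ℓ) 1 - u)^2) volume 0 1 :=
    C2c.intervalIntegrable 0 1
  set L := fun u => (g u * (min (u+ℓ) 1 - max (u-ℓ) 0)
      + (Hfun g (min (u+ℓ) 1) - Hfun g (max (u-ℓ) 0))
      - ((u - max (u-ℓ) 0)^2 + (min (u+ℓ) 1 - u)^2)/2)/2 with hLdef
  have Lii : IntervalIntegrable L volume 0 1 := by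
    apply IntervalIntegrable.div_const
    apply IntervalIntegrable.sub (Aii.add Bii)
    exact (C1ii.add C2ii).div_const 2
  have mono : (∫ u in (0:ℝ)..1, L u) ≤ ∫ u in (0:ℝ)..1, ∫ v in (0:ℝ)..1, Dfun g u v := by
    apply intervalIntegral.integral_mono_on zero_le_one Lii (ID_ii hc hlip)
    intro u hu
    exact inner_lb hc hu hl0 hl1
  have evL : (∫ u in (0:ℝ)..1, L u)
      = ((∫ u in (0:ℝ)..1, g u * (min (u+ℓ) 1 - max (u-ℓ) 0))
        + (∫ u in (0:ℝ)..1, (Hfun g (min (u+ℓ) 1) - Hfun g (max (u-ℓ) 0)))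
        - ((∫ u in (0:ℝ)..1, (u - max (u-ℓ) 0)^2)
          + (∫ u in (0:ℝ)..1, (min (u+ℓ) 1 - u)^2))/2)/2 := by
    rw [hLdef]
    rw [intervalIntegral.integral_div]
    rw [intervalIntegral.integral_sub (Aii.add Bii) ((C1ii.add C2ii).div_const 2)]
    rw [intervalIntegral.integral_add Aii Bii]
    rw [intervalIntegral.integral_div]
    rw [intervalIntegral.integral_add C1ii C2ii]
  have p1 := P1 hc hb hl0 hl1
  have p2 := P2 hc hb hl0 hl2
  have p3 := P3 hl0 hl1
  have p4 := P4 hl0 hl1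
  rw [evL] at mono
  rw [p3, p4] at mono
  have : 2*G^2 ≤ ((2*ℓ*G - ℓ^3/3) + (2*ℓ*G - ℓ^3/3) - ((ℓ^2 - 2*ℓ^3/3) + (ℓ^2 - 2*ℓ^3/3))/2)/2 := by
    rw [hld]; ring_nf; nlinarith [hG0]
  calc 2*G^2 ≤ _ := this
    _ ≤ _ := by
        apply le_trans _ mono
        have h12 := p1
        have h22 := p2
        linarith

theorem diag_copula_rho_upper_bound' (δ δ' : ℝ → ℝ)
    (hδc : ContinuousOn δ (Icc 0 1))
    (hδlip : ∀ u ∈ Icc (0:ℝ) 1, ∀ v ∈ Icc (0:ℝ) 1, |δ u - δ v| ≤ 2 * |u - v|)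
    (hrange : ∀ t ∈ Icc (0:ℝ) 1, δ t ∈ Icc (0:ℝ) 1 ∧ δ t ≤ t)
    (hsym : ∀ u ∈ Icc (0:ℝ) 1, δ u = 2 * u - 1 + δ (1 - u)) :
    (6 * (∫ u in (0:ℝ)..1, min (min u u) ((δ u + δ u) / 2)) - 2
        = 6 * (∫ u in (0:ℝ)..1, δ u) - 2) ∧
    12 * (∫ u in (0:ℝ)..1, ∫ v in (0:ℝ)..1, min (min u v) ((δ u + δ v) / 2)) - 3
      ≤ 1 - 2/3 * (1 - (6 * (∫ u in (0:ℝ)..1, δ u) - 2)) ^ 2 := by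
  have h0 : (0:ℝ) ∈ Icc (0:ℝ) 1 := left_mem_Icc.2 zero_le_one
  have h1 : (1:ℝ) ∈ Icc (0:ℝ) 1 := right_mem_Icc.2 zero_le_one
  set g : ℝ → ℝ := fun u => u - δ u with hgdef
  have hgc : ContinuousOn g (Icc 0 1) := continuousOn_id.sub hδc
  have hgb : ∀ u ∈ Icc (0:ℝ) 1, 0 ≤ g u ∧ g u ≤ u ∧ g u ≤ 1 - u := by
    intro u hu
    have r1 := (hrange u hu).1.1
    have r2 := (hrange u hu).2
    have r3 := (hrange (1-u) ⟨by linarith [hu.2], by linarith [hu.1]⟩).1.1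
    have r4 := hsym u hu
    refine ⟨by simp [hgdef]; linarith, by simp [hgdef]; linarith, by simp [hgdef]; linarith⟩
  have hglip : ∀ u ∈ Icc (0:ℝ) 1, ∀ v ∈ Icc (0:ℝ) 1, |g u - g v| ≤ 3 * |u - v| := by
    intro u hu v hv
    have := hδlip u hu v hv
    have e : g u - g v = (u - v) - (δ u - δ v) := by simp [hgdef]; ring
    rw [e]
    calc |(u - v) - (δ u - δ v)| ≤ |u - v| + |δ u - δ v| := abs_sub _ _
      _ ≤ 3 * |u - v| := by linarith
  have hδii : IntervalIntegrable δ volume 0 1 :=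
    (hδc.mono (uIcc_subset_Icc h0 h1)).intervalIntegrable
  -- footrule
  have foot : (∫ u in (0:ℝ)..1, min (min u u) ((δ u + δ u) / 2)) = ∫ u in (0:ℝ)..1, δ u := by
    apply intervalIntegral.integral_congr
    intro u hu
    rw [uIcc_of_le zero_le_one] at hu
    show min (min u u) ((δ u + δ u) / 2) = δ u
    rw [min_self, add_self_div_two]
    exact min_eq_right (hrange u hu).2
  refine ⟨by rw [foot], ?_⟩
  -- decomposition of the copula
  have Kdec : ∀ u v : ℝ, min (min u v) ((δ u + δ v) / 2) = min u v - Dfun g u v := by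
    intro u v
    have e1 : min u v - min (min u v) ((δ u + δ v) / 2)
        = max (min u v - (δ u + δ v) / 2) 0 := sub_min' _ _
    have e2 : min u v - (δ u + δ v) / 2 = (g u + g v - |u - v|)/2 := by
      rw [min_eq_avg]; simp [hgdef]; ring
    rw [Dfun, ← e2, ← e1]; ring
  -- inner integral
  have minii : ∀ u : ℝ, IntervalIntegrable (fun v => min u v) volume 0 1 :=
    fun u => (continuous_const.min continuous_id).intervalIntegrable 0 1
  have inner : ∀ u ∈ Icc (0:ℝ) 1,
      (∫ v in (0:ℝ)..1, min (min u v) ((δ u + δ v) / 2))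
        = (u - u^2/2) - ∫ v in (0:ℝ)..1, Dfun g u v := by
    intro u hu
    have e : (∫ v in (0:ℝ)..1, min (min u v) ((δ u + δ v) / 2))
        = ∫ v in (0:ℝ)..1, (min u v - Dfun g u v) := by
      apply intervalIntegral.integral_congr
      intro v _
      exact Kdec u v
    rw [e, intervalIntegral.integral_sub (minii u) (D_ii hgc u h0 h1)]
    congr 1
    -- ∫ min u v dv = u - u^2/2
    have e1 : (∫ v in (0:ℝ)..u, min u v) = ∫ v in (0:ℝ)..u, v := by
      apply intervalIntegral.integral_congr
      intro v hv; rw [uIcc_of_le hu.1] at hv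
      exact min_eq_right hv.2
    have e2 : (∫ v in u..(1:ℝ), min u v) = ∫ v in u..(1:ℝ), u := by
      apply intervalIntegral.integral_congr
      intro v hv; rw [uIcc_of_le hu.2] at hv
      exact min_eq_left hv.1
    have cmin : Continuous fun v : ℝ => min u v := continuous_const.min continuous_id
    have esplit := intervalIntegral.integral_add_adjacent_intervals (a := (0:ℝ)) (b := u)
      (c := (1:ℝ)) (f := fun v => min u v)
      (cmin.intervalIntegrable (μ := volume) 0 u) (cmin.intervalIntegrable (μ := volume) u 1)
    rw [e1, e2, integral_id, intconst] at esplit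
    rw [← esplit]; ring
  -- outer integral
  have outer : (∫ u in (0:ℝ)..1, ∫ v in (0:ℝ)..1, min (min u v) ((δ u + δ v) / 2))
      = 1/3 - ∫ u in (0:ℝ)..1, ∫ v in (0:ℝ)..1, Dfun g u v := by
    have e : (∫ u in (0:ℝ)..1, ∫ v in (0:ℝ)..1, min (min u v) ((δ u + δ v) / 2))
        = ∫ u in (0:ℝ)..1, ((u - u^2/2) - ∫ v in (0:ℝ)..1, Dfun g u v) := by
      apply intervalIntegral.integral_congr
      intro u hu; rw [uIcc_of_le zero_le_one] at hu
      exact inner u hu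
    rw [e, intervalIntegral.integral_sub
      ((show Continuous fun u : ℝ => u - u^2/2 by fun_prop).intervalIntegrable 0 1)
      (ID_ii hgc hglip)]
    congr 1
    rw [intervalIntegral.integral_sub intervalIntegral.intervalIntegrable_id
      ((show Continuous fun u : ℝ => u^2/2 by fun_prop).intervalIntegrable 0 1),
      integral_id, intervalIntegral.integral_div, integral_pow]
    norm_num
  -- core bound
  have hcore := core hgc hgb hglip
  -- relation between ∫δ and G
  have hGrel : (∫ u in (0:ℝ)..1, δ u) = 1/2 - Hfun g 1 := by
    have : Hfun g 1 = (∫ u in (0:ℝ)..1, u) - ∫ u in (0:ℝ)..1, δ u := by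
      rw [← intervalIntegral.integral_sub intervalIntegral.intervalIntegrable_id hδii]
      rfl
    rw [this, integral_id]; ring
  rw [outer, hGrel]
  set G := Hfun g 1
  nlinarith [hcore]

theorem diag_copula_rho_upper_bound (δ δ' : ℝ → ℝ) (hδ : SmoothSymDiagonal δ δ') :
    spearmanFootrule (diagCopula δ) = 6 * (∫ u in (0:ℝ)..1, δ u) - 2 ∧
    spearmanRho (diagCopula δ) ≤ 1 - 2/3 * (1 - spearmanFootrule (diagCopula δ)) ^ 2 := by
  obtain ⟨hc, -, hlip, -, -, hrange, hsym, -, -, -⟩ := hδ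
  have main := diag_copula_rho_upper_bound' δ δ' hc hlip hrange hsym
  have h1 : spearmanFootrule (diagCopula δ) = 6 * (∫ u in (0:ℝ)..1, δ u) - 2 := by
    simpa [spearmanFootrule, diagCopula] using main.1
  refine ⟨h1, ?_⟩
  rw [h1]
  simpa [spearmanRho, diagCopula] using main.2
end
end
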